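/- arXiv:2404.10950 — 3 statements merged into one kernel-verified Lean document; each statement's English description precedes it below -/
import Mathlib

section
/- Let α ∈ (1,∞), let p_X be a strictly positive probability distribution on 𝒳, p_{Y|X} a channel with p_{Y|X}(y|x) > 0 for all x, y, and let r_{X|Y} be a strictly positive reverse channel. Then over all channels q̃_{Y|X}, the functional F̃_α^C(q̃_{Y|X}, r_{X|Y}) is maximized by q̃*_{Y|X}(y|x) := p_{Y|X}(y|x) r_{X|Y}(x|y)^{1−1/α} / Σ_{y'} p_{Y|X}(y'|x) r_{X|Y}(x|y')^{1−1/α}, i.e., F̃_α^C(q̃_{Y|X}, r_{X|Y}) ≤ F̃_α^C(q̃*_{Y|X}, r_{X|Y}) for every channel q̃_{Y|X}. -/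
/-- A probability mass function on a finite type. -/
def IsPMF {Z : Type*} [Fintype Z] (q : Z → ℝ) : Prop :=
  (∀ z, 0 ≤ q z) ∧ ∑ z, q z = 1

/-- Kullback--Leibler divergence (natural log). -/
noncomputable def klD {Z : Type*} [Fintype Z] (p q : Z → ℝ) : ℝ :=
  ∑ z, p z * Real.log (p z / q z)

/-- `F̃_α^C(q̃_{Y|X}, r_{X|Y}) = (α/(1−α)) D(p_X q̃_{Y|X} ‖ p_X p_{Y|X})
  + Σ_{x,y} p_X(x) q̃_{Y|X}(y|x) log(r(x|y)/p_X(x))`. -/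
noncomputable def FtildeC {X Y : Type*} [Fintype X] [Fintype Y]
    (α : ℝ) (pX : X → ℝ) (pYX : X → Y → ℝ) (qt : X → Y → ℝ) (r : Y → X → ℝ) : ℝ :=
  (α / (1 - α)) * klD (fun z : X × Y => pX z.1 * qt z.1 z.2)
      (fun z : X × Y => pX z.1 * pYX z.1 z.2)
  + ∑ x, ∑ y, pX x * qt x y * Real.log (r y x / pX x)

/-- Gibbs' inequality / nonnegativity of KL divergence. -/
lemma kl_nonneg' {Y : Type*} [Fintype Y] (q s : Y → ℝ)
    (hq : ∀ y, 0 ≤ q y) (hq1 : ∑ y, q y = 1)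
    (hs : ∀ y, 0 < s y) (hs1 : ∑ y, s y = 1) :
    0 ≤ ∑ y, q y * Real.log (q y / s y) := by
  have key : ∀ y, q y - s y ≤ q y * Real.log (q y / s y) := by
    intro y
    rcases eq_or_lt_of_le (hq y) with h | h
    · rw [← h]
      simpa using (hs y).le
    · have hlog : Real.log (s y / q y) ≤ s y / q y - 1 :=
        Real.log_le_sub_one_of_pos (div_pos (hs y) h)
      have h2 : 1 - s y / q y ≤ Real.log (q y / s y) := by
        rw [Real.log_div (ne_of_gt h) (ne_of_gt (hs y))]
        rw [Real.log_div (ne_of_gt (hs y)) (ne_of_gt h)] at hlog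
        linarith
      calc q y - s y = q y * (1 - s y / q y) := by field_simp
        _ ≤ q y * Real.log (q y / s y) := mul_le_mul_of_nonneg_left h2 (hq y)
  calc (0:ℝ) = ∑ y, (q y - s y) := by rw [Finset.sum_sub_distrib, hq1, hs1]; ring
    _ ≤ _ := Finset.sum_le_sum fun y _ => key y

/-- The tilted distribution maximizes `-(D(q‖p) - ∑ q log w)`. -/
lemma gibbs_ineq {Y : Type*} [Fintype Y] [Nonempty Y]
    (p w q : Y → ℝ) (hp : ∀ y, 0 < p y) (hw : ∀ y, 0 < w y)
    (hq : ∀ y, 0 ≤ q y) (hq1 : ∑ y, q y = 1) :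
    ((∑ y, (p y * w y / ∑ y', p y' * w y') *
        Real.log ((p y * w y / ∑ y', p y' * w y') / p y))
      - ∑ y, (p y * w y / ∑ y', p y' * w y') * Real.log (w y))
    ≤ (∑ y, q y * Real.log (q y / p y)) - ∑ y, q y * Real.log (w y) := by
  set Z : ℝ := ∑ y', p y' * w y' with hZdef
  have hZ : 0 < Z := Finset.sum_pos (fun y _ => mul_pos (hp y) (hw y)) Finset.univ_nonempty
  set s : Y → ℝ := fun y => p y * w y / Z with hsdef
  have hs : ∀ y, 0 < s y := fun y => div_pos (mul_pos (hp y) (hw y)) hZ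
  have hs1 : ∑ y, s y = 1 := by
    simp only [hsdef, div_eq_mul_inv, ← Finset.sum_mul]
    rw [← hZdef, mul_inv_cancel₀ hZ.ne']
  have hLHS : ((∑ y, s y * Real.log (s y / p y)) - ∑ y, s y * Real.log (w y))
      = - Real.log Z := by
    rw [← Finset.sum_sub_distrib]
    have : ∀ y ∈ Finset.univ, s y * Real.log (s y / p y) - s y * Real.log (w y)
        = s y * (- Real.log Z) := by
      intro y _
      have h1 : s y / p y = w y / Z := by
        field_simp [hsdef, (hp y).ne', hZ.ne']
        exact div_mul_cancel₀ _ hZ.ne'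
      rw [h1, Real.log_div (hw y).ne' hZ.ne']
      ring
    rw [Finset.sum_congr rfl this, ← Finset.sum_mul, hs1]
    ring
  have hRHS : ((∑ y, q y * Real.log (q y / p y)) - ∑ y, q y * Real.log (w y))
      = (∑ y, q y * Real.log (q y / s y)) - Real.log Z := by
    rw [← Finset.sum_sub_distrib]
    have : ∀ y ∈ Finset.univ, q y * Real.log (q y / p y) - q y * Real.log (w y)
        = q y * Real.log (q y / s y) - q y * Real.log Z := by
      intro y _
      rcases eq_or_lt_of_le (hq y) with h | h
      · rw [← h]; ring
      · have hlog : Real.log (q y / p y) - Real.log (w y)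
            = Real.log (q y / s y) - Real.log Z := by
          rw [Real.log_div h.ne' (hp y).ne', Real.log_div h.ne' (hs y).ne',
            hsdef]
          rw [Real.log_div (mul_pos (hp y) (hw y)).ne' hZ.ne',
            Real.log_mul (hp y).ne' (hw y).ne']
          ring
        nlinarith [hlog]
    rw [Finset.sum_congr rfl this, Finset.sum_sub_distrib, ← Finset.sum_mul, hq1]
    ring
  rw [hLHS, hRHS]
  have := kl_nonneg' q s hq hq1 hs hs1
  linarith

/-- Rewriting `FtildeC` as a `pX`-average of per-`x` functionals. -/
lemma FtildeC_eq_sum {X Y : Type*} [Fintype X] [Fintype Y]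
    (α : ℝ) (pX : X → ℝ) (hpXpos : ∀ x, 0 < pX x)
    (pYX : X → Y → ℝ) (qt : X → Y → ℝ) (r : Y → X → ℝ) :
    FtildeC α pX pYX qt r = ∑ x, pX x *
      ((α / (1 - α)) * ∑ y, qt x y * Real.log (qt x y / pYX x y)
        + ∑ y, qt x y * Real.log (r y x / pX x)) := by
  have hkl : ∀ x y, pX x * qt x y * Real.log ((pX x * qt x y) / (pX x * pYX x y))
      = pX x * (qt x y * Real.log (qt x y / pYX x y)) := by
    intro x y
    rcases eq_or_ne (qt x y) 0 with h | h
    · simp [h]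
    · rw [mul_div_mul_left _ _ (hpXpos x).ne']
      ring
  simp only [FtildeC, klD, Fintype.sum_prod_type]
  rw [Finset.mul_sum, ← Finset.sum_add_distrib]
  refine Finset.sum_congr rfl fun x _ => ?_
  have h1 : ∑ y, pX x * qt x y * Real.log ((pX x * qt x y) / (pX x * pYX x y))
      = pX x * ∑ y, qt x y * Real.log (qt x y / pYX x y) := by
    rw [Finset.mul_sum]
    exact Finset.sum_congr rfl fun y _ => hkl x y
  have h2 : ∑ y, pX x * qt x y * Real.log (r y x / pX x)
      = pX x * ∑ y, qt x y * Real.log (r y x / pX x) := by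
    rw [Finset.mul_sum]
    exact Finset.sum_congr rfl fun y _ => mul_assoc _ _ _
  rw [h1, h2]
  ring

/-- For `α > 1` and a fixed strictly positive reverse channel `r_{X|Y}`: over all channels
`q̃_{Y|X}`, the functional `F̃_α^C(·, r_{X|Y})` is maximized by
`q̃*(y|x) = p_{Y|X}(y|x) r(x|y)^{1−1/α} / Σ_{y'} p_{Y|X}(y'|x) r(x|y')^{1−1/α}`. -/
theorem FtildeC_le_tilted_channel {X Y : Type*} [Fintype X] [Fintype Y]
    [Nonempty X] [Nonempty Y]
    (α : ℝ) (hα : 1 < α)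
    (pX : X → ℝ) (hpX : IsPMF pX) (hpXpos : ∀ x, 0 < pX x)
    (pYX : X → Y → ℝ) (hpYX : ∀ x, IsPMF (pYX x)) (hpYXpos : ∀ x y, 0 < pYX x y)
    (r : Y → X → ℝ) (hr : ∀ y, IsPMF (r y)) (hrpos : ∀ y x, 0 < r y x) :
    ∀ qt : X → Y → ℝ, (∀ x, IsPMF (qt x)) →
      FtildeC α pX pYX qt r ≤
      FtildeC α pX pYX
        (fun x y => pYX x y * r y x ^ (1 - 1 / α) /
          ∑ y', pYX x y' * r y' x ^ (1 - 1 / α)) r := by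
  intro qt hqt
  have hα0 : (0:ℝ) < α := by linarith
  have hβ : 0 < 1 - 1 / α := by
    have : 1 / α < 1 := by
      rw [div_lt_one hα0]; exact hα
    linarith
  set c : ℝ := α / (1 - α) with hcdef
  have hc : c < 0 := div_neg_of_pos_of_neg hα0 (by linarith)
  have hcβ : c * (1 - 1 / α) = -1 := by
    rw [hcdef, div_mul_eq_mul_div, div_eq_iff (by linarith : (1:ℝ) - α ≠ 0)]
    field_simp
    ring
  set β : ℝ := 1 - 1 / α with hβdef
  set qs : X → Y → ℝ := fun x y => pYX x y * r y x ^ β /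
      ∑ y', pYX x y' * r y' x ^ β with hqsdef
  have hw : ∀ x y, 0 < r y x ^ β := fun x y => Real.rpow_pos_of_pos (hrpos y x) β
  have hZ : ∀ x, 0 < ∑ y', pYX x y' * r y' x ^ β :=
    fun x => Finset.sum_pos (fun y _ => mul_pos (hpYXpos x y) (hw x y)) Finset.univ_nonempty
  have hqs : ∀ x y, 0 < qs x y :=
    fun x y => div_pos (mul_pos (hpYXpos x y) (hw x y)) (hZ x)
  have hqs1 : ∀ x, ∑ y, qs x y = 1 := by
    intro x
    simp only [hqsdef, div_eq_mul_inv, ← Finset.sum_mul]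
    rw [mul_inv_cancel₀ (hZ x).ne']
  rw [FtildeC_eq_sum α pX hpXpos pYX qt r, FtildeC_eq_sum α pX hpXpos pYX qs r]
  refine Finset.sum_le_sum fun x _ => mul_le_mul_of_nonneg_left ?_ (hpXpos x).le
  -- expand log (r y x / pX x)
  have expand : ∀ (q : Y → ℝ), (∑ y, q y = 1) →
      ∑ y, q y * Real.log (r y x / pX x)
        = (∑ y, q y * Real.log (r y x)) - Real.log (pX x) := by
    intro q hq1
    have : ∀ y ∈ Finset.univ, q y * Real.log (r y x / pX x)
        = q y * Real.log (r y x) - q y * Real.log (pX x) := by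
      intro y _
      rw [Real.log_div (hrpos y x).ne' (hpXpos x).ne']
      ring
    rw [Finset.sum_congr rfl this, Finset.sum_sub_distrib, ← Finset.sum_mul, hq1, one_mul]
  rw [expand (qt x) (hqt x).2, expand (qs x) (hqs1 x)]
  -- key inequality from gibbs_ineq
  have hg := gibbs_ineq (pYX x) (fun y => r y x ^ β) (qt x)
    (hpYXpos x) (hw x) (hqt x).1 (hqt x).2
  have hlw : ∀ (q : Y → ℝ), ∑ y, q y * Real.log (r y x ^ β)
      = β * ∑ y, q y * Real.log (r y x) := by
    intro q
    rw [Finset.mul_sum]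
    exact Finset.sum_congr rfl fun y _ => by rw [Real.log_rpow (hrpos y x)]; ring
  have hDs : ∑ y, (pYX x y * r y x ^ β / ∑ y', pYX x y' * r y' x ^ β) *
        Real.log ((pYX x y * r y x ^ β / ∑ y', pYX x y' * r y' x ^ β) / pYX x y)
      = ∑ y, qs x y * Real.log (qs x y / pYX x y) := rfl
  have hLs : ∑ y, (pYX x y * r y x ^ β / ∑ y', pYX x y' * r y' x ^ β) *
        Real.log (r y x ^ β) = ∑ y, qs x y * Real.log (r y x ^ β) := rfl
  rw [hDs, hLs, hlw (qt x), hlw (qs x)] at hg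
  -- multiply by c < 0
  have hg2 := mul_le_mul_of_nonpos_left hg hc.le
  have e1 : ∀ D R : ℝ, c * (D - β * R) = c * D + R := by
    intro D R
    calc c * (D - β * R) = c * D - (c * β) * R := by ring
      _ = c * D + R := by rw [hcβ]; ring
  rw [e1, e1] at hg2
  rw [← hcdef]
  linarith
end

section
/- Let α ∈ (1,∞) and let p_{Y|X} be a channel with p_{Y|X}(y|x) > 0 for all x, y. Consider F̃_α^{LP}(p_X, q̃_{X,Y}, r_{X|Y}) as a function of a strictly positive distribution p_X on 𝒳, a strictly positive joint distribution q̃_{X,Y} on 𝒳×𝒴, and a reverse channel r_{X|Y}. Then: (1) for fixed (p_X, q̃_{X,Y}), F̃_α^{LP} is maximized over reverse channels by r*_{X|Y}(x|y) := q̃_{X,Y}(x,y)/Σ_{x'} q̃_{X,Y}(x',y); (2) for fixed (q̃_{X,Y}, r_{X|Y}) with r_{X|Y} strictly positive, F̃_α^{LP} is maximized over strictly positive distributions p_X by p*_X(x) := Σ_y q̃_{X,Y}(x,y); (3) for fixed (p_X, r_{X|Y}) with r_{X|Y} strictly positive, F̃_α^{LP} is maximized over strictly positive joint distributions q̃_{X,Y}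 by q̃*_{X,Y}(x,y) := q̂_X(x) q̂_{Y|X}(y|x), where q̂_{Y|X}(y|x) := p_{Y|X}(y|x) r_{X|Y}(x|y)^{1−1/α} / Σ_{y'} p_{Y|X}(y'|x) r_{X|Y}(x|y')^{1−1/α} and q̂_X(x) := p_X(x)^{α/(2α−1)} ( Σ_y p_{Y|X}(y|x) r_{X|Y}(x|y)^{1−1/α} )^{α/(2α−1)} / Σ_{x'} p_X(x')^{α/(2α−1)} ( Σ_y p_{Y|X}(y|x') r_{X|Y}(x'|y)^{1−1/α} )^{α/(2α−1)}. -/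
/-- Extended-real logarithm: `elog 0 = ⊥` (i.e. `log 0 = −∞`). -/
noncomputable def elog (t : ℝ) : EReal :=
  if t = 0 then ⊥ else ((Real.log t : ℝ) : EReal)

/-- `F̃_α^{LP}(p_X, q̃_{X,Y}, r_{X|Y}) = (α/(1−α)) D(q̃_{X,Y} ‖ q̃_X p_{Y|X})
  + Σ_{x,y} q̃_{X,Y}(x,y) log(r(x|y)/q̃_X(x)) + (α/(1−α)) D(q̃_X ‖ p_X)`,
valued in `ℝ ∪ {−∞}` (as `EReal`). -/
noncomputable def FtildeLP {X Y : Type*} [Fintype X] [Fintype Y]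
    (α : ℝ) (pYX : X → Y → ℝ) (pX : X → ℝ) (qt : X × Y → ℝ) (r : Y → X → ℝ) : EReal :=
  (((α / (1 - α)) * klD qt (fun z : X × Y => (∑ y, qt (z.1, y)) * pYX z.1 z.2) : ℝ) : EReal)
  + ∑ z : X × Y, ((qt z : ℝ) : EReal) * elog (r z.2 z.1 / ∑ y, qt (z.1, y))
  + (((α / (1 - α)) * klD (fun x => ∑ y, qt (x, y)) pX : ℝ) : EReal)

private lemma ereal_coe_sum {Z : Type*} (s : Finset Z) (f : Z → ℝ) :
    ((∑ i ∈ s, f i : ℝ) : EReal) = ∑ i ∈ s, ((f i : ℝ) : EReal) :=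
  map_sum (⟨⟨Real.toEReal, EReal.coe_zero⟩, EReal.coe_add⟩ : ℝ →+ EReal) f s

private lemma gibbs_scaled {Z : Type*} [Fintype Z] [Nonempty Z]
    (p w : Z → ℝ) (hp : ∀ z, 0 ≤ p z) (hw : ∀ z, 0 < w z)
    (s : ℝ) (hs : 0 < s) (hps : ∑ z, p z = s) :
    (∑ z, p z * Real.log (w z)) - (∑ z, p z * Real.log (p z))
      ≤ s * Real.log (∑ z, w z) - s * Real.log s := by
  have hW : 0 < ∑ z, w z := Finset.sum_pos (fun z _ => hw z) Finset.univ_nonempty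
  set W := ∑ z, w z with hWdef
  have key : ∀ z, p z * (Real.log (w z) - Real.log (p z) + (Real.log s - Real.log W))
      ≤ w z * s / W - p z := by
    intro z
    rcases eq_or_lt_of_le (hp z) with h | h
    · rw [← h]
      have : (0:ℝ) ≤ w z * s / W := (div_pos (mul_pos (hw z) hs) hW).le
      simpa using this
    · have h1 : Real.log (w z * s / (p z * W)) ≤ w z * s / (p z * W) - 1 :=
        Real.log_le_sub_one_of_pos (div_pos (mul_pos (hw z) hs) (mul_pos h hW))
      have h2 : Real.log (w z * s / (p z * W))
          = Real.log (w z) - Real.log (p z) + (Real.log s - Real.log W) := by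
        rw [Real.log_div (ne_of_gt (mul_pos (hw z) hs)) (ne_of_gt (mul_pos h hW)),
          Real.log_mul (ne_of_gt (hw z)) (ne_of_gt hs),
          Real.log_mul (ne_of_gt h) (ne_of_gt hW)]
        ring
      have h3 : p z * Real.log (w z * s / (p z * W)) ≤ p z * (w z * s / (p z * W) - 1) :=
        mul_le_mul_of_nonneg_left h1 (le_of_lt h)
      have h4 : p z * (w z * s / (p z * W) - 1) = w z * s / W - p z := by
        field_simp
      rw [← h2]
      linarith
  have hsum := Finset.sum_le_sum (fun z (_ : z ∈ Finset.univ) => key z)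
  have e1 : ∑ z, (p z * (Real.log (w z) - Real.log (p z) + (Real.log s - Real.log W)))
      = (∑ z, p z * Real.log (w z)) - (∑ z, p z * Real.log (p z))
        + (s * Real.log s - s * Real.log W) := by
    simp only [mul_add, mul_sub]
    rw [Finset.sum_add_distrib, Finset.sum_sub_distrib, Finset.sum_sub_distrib,
      ← Finset.sum_mul, ← Finset.sum_mul, hps]
  have e2 : ∑ z, (w z * s / W - p z) = 0 := by
    rw [Finset.sum_sub_distrib, hps]
    have : ∑ z, w z * s / W = s := by
      rw [← Finset.sum_div, ← Finset.sum_mul, ← hWdef]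
      field_simp
    rw [this]
    exact sub_self s
  rw [e1, e2] at hsum
  linarith

private lemma gibbs_post {Z : Type*} [Fintype Z] [Nonempty Z] (p w : Z → ℝ)
    (hp : ∀ z, 0 < p z) (hw : ∀ z, 0 < w z) (hw1 : ∑ z, w z = 1) :
    ∑ z, p z * Real.log (w z) ≤ ∑ z, p z * Real.log (p z / ∑ z', p z') := by
  have hs : 0 < ∑ z', p z' := Finset.sum_pos (fun z _ => hp z) Finset.univ_nonempty
  have hg := gibbs_scaled p w (fun z => (hp z).le) hw _ hs rfl
  rw [hw1, Real.log_one, mul_zero] at hg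
  have e : ∑ z, p z * Real.log (p z / ∑ z', p z')
      = (∑ z, p z * Real.log (p z)) - (∑ z', p z') * Real.log (∑ z', p z') := by
    have h : ∀ z, p z * Real.log (p z / ∑ z', p z')
        = p z * Real.log (p z) - p z * Real.log (∑ z', p z') :=
      fun z => by rw [Real.log_div (ne_of_gt (hp z)) (ne_of_gt hs)]; ring
    rw [Finset.sum_congr rfl fun z _ => h z, Finset.sum_sub_distrib, ← Finset.sum_mul]
  rw [e]
  linarith

private lemma klD_nonneg {Z : Type*} [Fintype Z] [Nonempty Z] (p q : Z → ℝ)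
    (hp : ∀ z, 0 ≤ p z) (hp1 : ∑ z, p z = 1) (hq : ∀ z, 0 < q z) (hq1 : ∑ z, q z = 1) :
    0 ≤ klD p q := by
  have ht : ∀ z, p z * Real.log (p z / q z)
      = p z * Real.log (p z) - p z * Real.log (q z) := by
    intro z
    rcases eq_or_lt_of_le (hp z) with h | h
    · rw [← h]; ring
    · rw [Real.log_div (ne_of_gt h) (ne_of_gt (hq z))]; ring
  have hg := gibbs_scaled p q hp hq 1 one_pos hp1
  rw [hq1, Real.log_one, mul_zero] at hg
  unfold klD
  rw [Finset.sum_congr rfl fun z _ => ht z, Finset.sum_sub_distrib]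
  linarith

private noncomputable def Freal {X Y : Type*} [Fintype X] [Fintype Y]
    (α : ℝ) (pYX : X → Y → ℝ) (pX : X → ℝ) (qt : X × Y → ℝ) (r : Y → X → ℝ) : ℝ :=
  (α / (1 - α)) * klD qt (fun z : X × Y => (∑ y, qt (z.1, y)) * pYX z.1 z.2)
  + ∑ z : X × Y, qt z * Real.log (r z.2 z.1 / ∑ y, qt (z.1, y))
  + (α / (1 - α)) * klD (fun x => ∑ y, qt (x, y)) pX

private lemma FtildeLP_eq_Freal {X Y : Type*} [Fintype X] [Fintype Y] [Nonempty Y]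
    (α : ℝ) (pYX : X → Y → ℝ) (pX : X → ℝ) (qt : X × Y → ℝ) (r : Y → X → ℝ)
    (hqt : ∀ z, 0 < qt z) (hr : ∀ z : X × Y, 0 < r z.2 z.1) :
    FtildeLP α pYX pX qt r = ((Freal α pYX pX qt r : ℝ) : EReal) := by
  have hm : ∀ x, 0 < ∑ y, qt (x, y) :=
    fun x => Finset.sum_pos (fun y _ => hqt (x, y)) Finset.univ_nonempty
  unfold FtildeLP Freal
  rw [EReal.coe_add, EReal.coe_add]
  congr 1
  congr 1
  rw [ereal_coe_sum]
  refine Finset.sum_congr rfl fun z _ => ?_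
  rw [elog, if_neg (ne_of_gt (div_pos (hr z) (hm z.1))), EReal.coe_mul]

private lemma Freal_repr {X Y : Type*} [Fintype X] [Fintype Y] [Nonempty Y]
    (α : ℝ) (pYX : X → Y → ℝ) (hpYXpos : ∀ x y, 0 < pYX x y)
    (pX : X → ℝ) (hpXpos : ∀ x, 0 < pX x)
    (qt : X × Y → ℝ) (hqtpos : ∀ z, 0 < qt z)
    (r : Y → X → ℝ) (hrpos : ∀ y x, 0 < r y x) :
    Freal α pYX pX qt r
      = (α / (1 - α)) * (∑ x, ∑ y, qt (x, y) * Real.log (qt (x, y)))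
        - (α / (1 - α)) * (∑ x, ∑ y, qt (x, y) * Real.log (pYX x y))
        + (∑ x, ∑ y, qt (x, y) * Real.log (r y x))
        - (∑ x, (∑ y, qt (x, y)) * Real.log (∑ y, qt (x, y)))
        - (α / (1 - α)) * (∑ x, (∑ y, qt (x, y)) * Real.log (pX x)) := by
  have hm : ∀ x, 0 < ∑ y, qt (x, y) :=
    fun x => Finset.sum_pos (fun y _ => hqtpos (x, y)) Finset.univ_nonempty
  have h1 : ∀ z : X × Y, qt z * Real.log (qt z / ((∑ y, qt (z.1, y)) * pYX z.1 z.2))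
      = qt z * Real.log (qt z) - qt z * Real.log (∑ y, qt (z.1, y))
        - qt z * Real.log (pYX z.1 z.2) := by
    intro z
    rw [Real.log_div (ne_of_gt (hqtpos z)) (ne_of_gt (mul_pos (hm z.1) (hpYXpos z.1 z.2))),
      Real.log_mul (ne_of_gt (hm z.1)) (ne_of_gt (hpYXpos z.1 z.2))]
    ring
  have h2 : ∀ z : X × Y, qt z * Real.log (r z.2 z.1 / ∑ y, qt (z.1, y))
      = qt z * Real.log (r z.2 z.1) - qt z * Real.log (∑ y, qt (z.1, y)) := by
    intro z
    rw [Real.log_div (ne_of_gt (hrpos z.2 z.1)) (ne_of_gt (hm z.1))]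
    ring
  have h3 : ∀ x, (∑ y, qt (x, y)) * Real.log ((∑ y, qt (x, y)) / pX x)
      = (∑ y, qt (x, y)) * Real.log (∑ y, qt (x, y))
        - (∑ y, qt (x, y)) * Real.log (pX x) := by
    intro x
    rw [Real.log_div (ne_of_gt (hm x)) (ne_of_gt (hpXpos x))]
    ring
  unfold Freal klD
  simp only []
  rw [Finset.sum_congr rfl fun z _ => h1 z, Finset.sum_congr rfl fun z _ => h2 z,
    Finset.sum_congr rfl fun x _ => h3 x]
  simp only [Finset.sum_sub_distrib]
  simp only [Fintype.sum_prod_type]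
  have hqm : ∀ x : X, ∑ y, qt (x, y) * Real.log (∑ y', qt (x, y'))
      = (∑ y, qt (x, y)) * Real.log (∑ y, qt (x, y)) := by
    intro x
    rw [← Finset.sum_mul]
  simp only [hqm]
  ring

private lemma part1 {X Y : Type*} [Fintype X] [Fintype Y] [Nonempty X] [Nonempty Y]
    (α : ℝ) (pYX : X → Y → ℝ) (pX : X → ℝ)
    (qt : X × Y → ℝ) (hqtpos : ∀ z, 0 < qt z)
    (r : Y → X → ℝ) (hr : ∀ y, IsPMF (r y)) :
    FtildeLP α pYX pX qt r ≤
      FtildeLP α pYX pX qt (fun y x => qt (x, y) / ∑ x', qt (x', y)) := by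
  have hm : ∀ x, 0 < ∑ y, qt (x, y) :=
    fun x => Finset.sum_pos (fun y _ => hqtpos (x, y)) Finset.univ_nonempty
  have hsy : ∀ y, 0 < ∑ x', qt (x', y) :=
    fun y => Finset.sum_pos (fun x _ => hqtpos (x, y)) Finset.univ_nonempty
  by_cases hzero : ∃ z : X × Y, r z.2 z.1 = 0
  · obtain ⟨z0, hz0⟩ := hzero
    classical
    have hbot : (∑ z : X × Y, ((qt z : ℝ) : EReal) * elog (r z.2 z.1 / ∑ y, qt (z.1, y))) = ⊥ := by
      rw [← Finset.add_sum_erase _ _ (Finset.mem_univ z0)]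
      have he : elog (r z0.2 z0.1 / ∑ y, qt (z0.1, y)) = ⊥ := by
        rw [hz0]
        simp [elog]
      rw [he, EReal.mul_bot_of_pos (by exact_mod_cast hqtpos z0), EReal.bot_add]
    have hLbot : FtildeLP α pYX pX qt r = ⊥ := by
      unfold FtildeLP
      rw [hbot, EReal.add_bot, EReal.bot_add]
    rw [hLbot]
    exact bot_le
  · push_neg at hzero
    have hrpos : ∀ z : X × Y, 0 < r z.2 z.1 :=
      fun z => lt_of_le_of_ne ((hr z.2).1 z.1) (Ne.symm (hzero z))
    have hrstarpos : ∀ z : X × Y, 0 < (fun y x => qt (x, y) / ∑ x', qt (x', y)) z.2 z.1 :=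
      fun z => div_pos (hqtpos (z.1, z.2)) (hsy z.2)
    rw [FtildeLP_eq_Freal α pYX pX qt r hqtpos hrpos,
      FtildeLP_eq_Freal α pYX pX qt _ hqtpos hrstarpos, EReal.coe_le_coe_iff]
    unfold Freal
    simp only []
    have key : (∑ z : X × Y, qt z * Real.log (r z.2 z.1))
        ≤ ∑ z : X × Y, qt z * Real.log (qt (z.1, z.2) / ∑ x', qt (x', z.2)) := by
      have e1 : (∑ z : X × Y, qt z * Real.log (r z.2 z.1))
          = ∑ y, ∑ x, qt (x, y) * Real.log (r y x) := by
        rw [Fintype.sum_prod_type]; exact Finset.sum_comm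
      have e2 : (∑ z : X × Y, qt z * Real.log (qt (z.1, z.2) / ∑ x', qt (x', z.2)))
          = ∑ y, ∑ x, qt (x, y) * Real.log (qt (x, y) / ∑ x', qt (x', y)) := by
        rw [Fintype.sum_prod_type]; exact Finset.sum_comm
      rw [e1, e2]
      refine Finset.sum_le_sum fun y _ => ?_
      exact gibbs_post (fun x => qt (x, y)) (r y) (fun x => hqtpos (x, y))
        (fun x => hrpos ((x, y) : X × Y)) (hr y).2
    have expandL : (∑ z : X × Y, qt z * Real.log (r z.2 z.1 / ∑ y, qt (z.1, y)))
        = (∑ z : X × Y, qt z * Real.log (r z.2 z.1))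
          - ∑ z : X × Y, qt z * Real.log (∑ y, qt (z.1, y)) := by
      rw [← Finset.sum_sub_distrib]
      refine Finset.sum_congr rfl fun z _ => ?_
      rw [Real.log_div (ne_of_gt (hrpos z)) (ne_of_gt (hm z.1))]
      ring
    have expandR : (∑ z : X × Y, qt z * Real.log (qt (z.1, z.2) / (∑ x', qt (x', z.2)) / ∑ y, qt (z.1, y)))
        = (∑ z : X × Y, qt z * Real.log (qt (z.1, z.2) / ∑ x', qt (x', z.2)))
          - ∑ z : X × Y, qt z * Real.log (∑ y, qt (z.1, y)) := by
      rw [← Finset.sum_sub_distrib]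
      refine Finset.sum_congr rfl fun z _ => ?_
      rw [Real.log_div (ne_of_gt (hrstarpos z)) (ne_of_gt (hm z.1))]
      ring
    rw [expandL, expandR]
    linarith

private lemma part2 {X Y : Type*} [Fintype X] [Fintype Y] [Nonempty X] [Nonempty Y]
    (α : ℝ) (hα : 1 < α) (pYX : X → Y → ℝ)
    (qt : X × Y → ℝ) (hqt : IsPMF qt) (hqtpos : ∀ z, 0 < qt z)
    (r : Y → X → ℝ) (hrpos : ∀ y x, 0 < r y x)
    (pX : X → ℝ) (hpX : IsPMF pX) (hpXpos : ∀ x, 0 < pX x) :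
    FtildeLP α pYX pX qt r ≤ FtildeLP α pYX (fun x => ∑ y, qt (x, y)) qt r := by
  have hm : ∀ x, 0 < ∑ y, qt (x, y) :=
    fun x => Finset.sum_pos (fun y _ => hqtpos (x, y)) Finset.univ_nonempty
  have hm1 : ∑ x, ∑ y, qt (x, y) = 1 := by
    rw [← hqt.2, Fintype.sum_prod_type]
  rw [FtildeLP_eq_Freal α pYX pX qt r hqtpos (fun z => hrpos z.2 z.1),
    FtildeLP_eq_Freal α pYX _ qt r hqtpos (fun z => hrpos z.2 z.1), EReal.coe_le_coe_iff]
  unfold Freal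
  have h0 : klD (fun x => ∑ y, qt (x, y)) (fun x => ∑ y, qt (x, y)) = 0 := by
    unfold klD
    refine Finset.sum_eq_zero fun x _ => ?_
    simp only []
    rw [div_self (ne_of_gt (hm x)), Real.log_one, mul_zero]
  have h1 : 0 ≤ klD (fun x => ∑ y, qt (x, y)) pX :=
    klD_nonneg _ _ (fun x => (hm x).le) hm1 hpXpos hpX.2
  have hcneg : α / (1 - α) < 0 :=
    div_neg_of_pos_of_neg (by linarith) (by linarith)
  have hle : (α / (1 - α)) * klD (fun x => ∑ y, qt (x, y)) pX
      ≤ (α / (1 - α)) * klD (fun x => ∑ y, qt (x, y)) (fun x => ∑ y, qt (x, y)) := by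
    rw [h0, mul_zero]
    exact mul_nonpos_of_nonpos_of_nonneg hcneg.le h1
  linarith

private lemma part3 {X Y : Type*} [Fintype X] [Fintype Y] [Nonempty X] [Nonempty Y]
    (α : ℝ) (hα : 1 < α)
    (pYX : X → Y → ℝ) (hpYXpos : ∀ x y, 0 < pYX x y)
    (pX : X → ℝ) (hpXpos : ∀ x, 0 < pX x)
    (r : Y → X → ℝ) (hrpos : ∀ y x, 0 < r y x)
    (qt : X × Y → ℝ) (hqt1 : ∑ z, qt z = 1) (hqtpos : ∀ z, 0 < qt z)
    (qh : X × Y → ℝ)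
    (hqh : ∀ z : X × Y, qh z =
      (pX z.1 ^ (α / (2 * α - 1)) *
          (∑ y, pYX z.1 y * r y z.1 ^ (1 - 1 / α)) ^ (α / (2 * α - 1)) /
        ∑ x', pX x' ^ (α / (2 * α - 1)) *
          (∑ y, pYX x' y * r y x' ^ (1 - 1 / α)) ^ (α / (2 * α - 1))) *
      (pYX z.1 z.2 * r z.2 z.1 ^ (1 - 1 / α) /
        ∑ y', pYX z.1 y' * r y' z.1 ^ (1 - 1 / α))) :
    FtildeLP α pYX pX qt r ≤ FtildeLP α pYX pX qh r := by
  have hα0 : (0:ℝ) < α := by linarith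
  have hα1 : (0:ℝ) < α - 1 := by linarith
  have h2α : (0:ℝ) < 2 * α - 1 := by linarith
  set γ : ℝ := 1 - 1 / α with hγdef
  set δ : ℝ := α / (2 * α - 1) with hδdef
  set β : ℝ := α / (α - 1) with hβdef
  have hγpos : 0 < γ := by
    rw [hγdef]
    have : 1 / α < 1 := by rw [div_lt_one hα0]; linarith
    linarith
  have hβpos : 0 < β := by rw [hβdef]; positivity
  have hβγ : β * γ = 1 := by rw [hβdef, hγdef]; field_simp
  have hδβ : (β + 1) * δ = β := by
    rw [hβdef, hδdef]
    field_simp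
    linear_combination inv_mul_cancel₀ (show (-1 + α * 2 : ℝ) ≠ 0 by intro h; linarith)
  have hc : α / (1 - α) = -β := by
    rw [hβdef, div_eq_iff (by linarith : (1:ℝ) - α ≠ 0), neg_mul, ← neg_eq_iff_eq_neg]
    field_simp
    ring
  set S : X → ℝ := fun x => ∑ y, pYX x y * r y x ^ γ with hSdef
  have hS : ∀ x, S x = ∑ y, pYX x y * r y x ^ γ := fun x => by rw [hSdef]
  have hSpos : ∀ x, 0 < S x := fun x => by
    rw [hS]
    exact Finset.sum_pos
      (fun y _ => mul_pos (hpYXpos x y) (Real.rpow_pos_of_pos (hrpos y x) γ))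
      Finset.univ_nonempty
  set T : ℝ := ∑ x', pX x' ^ δ * S x' ^ δ with hTdef
  have hTpos : 0 < T := by
    rw [hTdef]
    exact Finset.sum_pos
      (fun x _ => mul_pos (Real.rpow_pos_of_pos (hpXpos x) δ) (Real.rpow_pos_of_pos (hSpos x) δ))
      Finset.univ_nonempty
  have hqh' : ∀ z : X × Y, qh z
      = (pX z.1 ^ δ * S z.1 ^ δ / T) * (pYX z.1 z.2 * r z.2 z.1 ^ γ / S z.1) := by
    intro z
    rw [hqh z]
  have hMhpos : ∀ x, 0 < pX x ^ δ * S x ^ δ / T := fun x =>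
    div_pos (mul_pos (Real.rpow_pos_of_pos (hpXpos x) δ) (Real.rpow_pos_of_pos (hSpos x) δ)) hTpos
  have hqhpos : ∀ z : X × Y, 0 < qh z := fun z => by
    rw [hqh' z]
    exact mul_pos (hMhpos z.1)
      (div_pos (mul_pos (hpYXpos z.1 z.2) (Real.rpow_pos_of_pos (hrpos z.2 z.1) γ)) (hSpos z.1))
  have hm : ∀ x, 0 < ∑ y, qt (x, y) :=
    fun x => Finset.sum_pos (fun y _ => hqtpos (x, y)) Finset.univ_nonempty
  have hmarg : ∀ x, (∑ y, qh (x, y)) = pX x ^ δ * S x ^ δ / T := by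
    intro x
    have h : ∀ y, qh (x, y) = (pX x ^ δ * S x ^ δ / T) * (pYX x y * r y x ^ γ / S x) :=
      fun y => hqh' (x, y)
    rw [Finset.sum_congr rfl fun y _ => h y, ← Finset.mul_sum, ← Finset.sum_div,
      ← hS x, div_self (ne_of_gt (hSpos x)), mul_one]
  have hmh1 : (∑ x, pX x ^ δ * S x ^ δ / T) = 1 := by
    rw [← Finset.sum_div, ← hTdef, div_self (ne_of_gt hTpos)]
  -- pass to real form and representation
  rw [FtildeLP_eq_Freal α pYX pX qt r hqtpos (fun z => hrpos z.2 z.1),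
    FtildeLP_eq_Freal α pYX pX qh r hqhpos (fun z => hrpos z.2 z.1), EReal.coe_le_coe_iff,
    Freal_repr α pYX hpYXpos pX hpXpos qt hqtpos r hrpos,
    Freal_repr α pYX hpYXpos pX hpXpos qh hqhpos r hrpos, hc]
  simp only [hmarg]
  -- compute the right-hand side
  have hlogMh : ∀ x, Real.log (pX x ^ δ * S x ^ δ / T)
      = δ * Real.log (pX x) + δ * Real.log (S x) - Real.log T := by
    intro x
    rw [Real.log_div (ne_of_gt (mul_pos (Real.rpow_pos_of_pos (hpXpos x) δ)
        (Real.rpow_pos_of_pos (hSpos x) δ))) (ne_of_gt hTpos),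
      Real.log_mul (ne_of_gt (Real.rpow_pos_of_pos (hpXpos x) δ))
        (ne_of_gt (Real.rpow_pos_of_pos (hSpos x) δ)),
      Real.log_rpow (hpXpos x), Real.log_rpow (hSpos x)]
  have hlogqh : ∀ (x : X) (y : Y), Real.log (qh (x, y))
      = (δ * Real.log (pX x) + δ * Real.log (S x) - Real.log T)
        + Real.log (pYX x y) + γ * Real.log (r y x) - Real.log (S x) := by
    intro x y
    rw [hqh' (x, y)]
    rw [Real.log_mul (ne_of_gt (hMhpos x))
        (ne_of_gt (div_pos (mul_pos (hpYXpos x y) (Real.rpow_pos_of_pos (hrpos y x) γ)) (hSpos x))),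
      Real.log_div (ne_of_gt (mul_pos (hpYXpos x y) (Real.rpow_pos_of_pos (hrpos y x) γ)))
        (ne_of_gt (hSpos x)),
      Real.log_mul (ne_of_gt (hpYXpos x y)) (ne_of_gt (Real.rpow_pos_of_pos (hrpos y x) γ)),
      Real.log_rpow (hrpos y x), hlogMh x]
    ring
  have inner : ∀ x, (∑ y, (-β * (qh (x, y) * Real.log (qh (x, y)))
        + β * (qh (x, y) * Real.log (pYX x y)) + qh (x, y) * Real.log (r y x)))
      = (pX x ^ δ * S x ^ δ / T)
        * (-β * (δ * Real.log (pX x) + δ * Real.log (S x) - Real.log T) + β * Real.log (S x)) := by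
    intro x
    have hterm : ∀ y, -β * (qh (x, y) * Real.log (qh (x, y)))
        + β * (qh (x, y) * Real.log (pYX x y)) + qh (x, y) * Real.log (r y x)
        = qh (x, y) * (-β * (δ * Real.log (pX x) + δ * Real.log (S x) - Real.log T)
            + β * Real.log (S x)) := by
      intro y
      rw [hlogqh x y]
      linear_combination (-(qh (x, y) * Real.log (r y x))) * hβγ
    rw [Finset.sum_congr rfl fun y _ => hterm y, ← Finset.sum_mul, hmarg x]
  have hE : -β * (∑ x, ∑ y, qh (x, y) * Real.log (qh (x, y)))
      - -β * (∑ x, ∑ y, qh (x, y) * Real.log (pYX x y))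
      + (∑ x, ∑ y, qh (x, y) * Real.log (r y x))
      - (∑ x, (pX x ^ δ * S x ^ δ / T) * Real.log (pX x ^ δ * S x ^ δ / T))
      - -β * (∑ x, (pX x ^ δ * S x ^ δ / T) * Real.log (pX x))
      = (β + 1) * Real.log T := by
    have hL : -β * (∑ x, ∑ y, qh (x, y) * Real.log (qh (x, y)))
        - -β * (∑ x, ∑ y, qh (x, y) * Real.log (pYX x y))
        + (∑ x, ∑ y, qh (x, y) * Real.log (r y x))
        = ∑ x, ∑ y, (-β * (qh (x, y) * Real.log (qh (x, y)))
            + β * (qh (x, y) * Real.log (pYX x y)) + qh (x, y) * Real.log (r y x)) := by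
      simp only [Finset.sum_add_distrib, ← Finset.mul_sum]
      ring
    rw [hL, Finset.sum_congr rfl fun x _ => inner x]
    have final : ∀ x, (pX x ^ δ * S x ^ δ / T)
          * (-β * (δ * Real.log (pX x) + δ * Real.log (S x) - Real.log T) + β * Real.log (S x))
        - (pX x ^ δ * S x ^ δ / T) * Real.log (pX x ^ δ * S x ^ δ / T)
        - -β * ((pX x ^ δ * S x ^ δ / T) * Real.log (pX x))
        = (pX x ^ δ * S x ^ δ / T) * ((β + 1) * Real.log T) := by
      intro x
      rw [hlogMh x]
      linear_combination (-(pX x ^ δ * S x ^ δ / T)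
        * (Real.log (pX x) + Real.log (S x))) * hδβ
    have comb : (∑ x, (pX x ^ δ * S x ^ δ / T)
          * (-β * (δ * Real.log (pX x) + δ * Real.log (S x) - Real.log T) + β * Real.log (S x)))
        - (∑ x, (pX x ^ δ * S x ^ δ / T) * Real.log (pX x ^ δ * S x ^ δ / T))
        - -β * (∑ x, (pX x ^ δ * S x ^ δ / T) * Real.log (pX x))
        = ∑ x, ((pX x ^ δ * S x ^ δ / T)
            * (-β * (δ * Real.log (pX x) + δ * Real.log (S x) - Real.log T) + β * Real.log (S x))
          - (pX x ^ δ * S x ^ δ / T) * Real.log (pX x ^ δ * S x ^ δ / T)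
          - -β * ((pX x ^ δ * S x ^ δ / T) * Real.log (pX x))) := by
      rw [Finset.mul_sum, ← Finset.sum_sub_distrib, ← Finset.sum_sub_distrib]
    rw [comb, Finset.sum_congr rfl fun x _ => final x, ← Finset.sum_mul, hmh1, one_mul]
  rw [hE]
  -- now the upper bound for the left-hand side
  have hA : ∀ x, (∑ y, qt (x, y) * (Real.log (pYX x y) + γ * Real.log (r y x)))
      - (∑ y, qt (x, y) * Real.log (qt (x, y)))
      ≤ (∑ y, qt (x, y)) * Real.log (S x) - (∑ y, qt (x, y)) * Real.log (∑ y, qt (x, y)) := by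
    intro x
    have hg := gibbs_scaled (fun y => qt (x, y)) (fun y => pYX x y * r y x ^ γ)
      (fun y => (hqtpos (x, y)).le)
      (fun y => mul_pos (hpYXpos x y) (Real.rpow_pos_of_pos (hrpos y x) γ))
      (∑ y, qt (x, y)) (hm x) rfl
    have hw : ∀ y, Real.log (pYX x y * r y x ^ γ)
        = Real.log (pYX x y) + γ * Real.log (r y x) := fun y => by
      rw [Real.log_mul (ne_of_gt (hpYXpos x y)) (ne_of_gt (Real.rpow_pos_of_pos (hrpos y x) γ)),
        Real.log_rpow (hrpos y x)]
    have he : (∑ y, qt (x, y) * Real.log (pYX x y * r y x ^ γ))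
        = ∑ y, qt (x, y) * (Real.log (pYX x y) + γ * Real.log (r y x)) :=
      Finset.sum_congr rfl fun y _ => by rw [hw y]
    rw [he, ← hS x] at hg
    exact hg
  have hAsum := Finset.sum_le_sum fun x (_ : x ∈ Finset.univ) => hA x
  rw [Finset.sum_sub_distrib, Finset.sum_sub_distrib] at hAsum
  have e1 : (∑ x, ∑ y, qt (x, y) * (Real.log (pYX x y) + γ * Real.log (r y x)))
      = (∑ x, ∑ y, qt (x, y) * Real.log (pYX x y))
        + γ * ∑ x, ∑ y, qt (x, y) * Real.log (r y x) := by
    have e1x : ∀ x, (∑ y, qt (x, y) * (Real.log (pYX x y) + γ * Real.log (r y x)))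
        = (∑ y, qt (x, y) * Real.log (pYX x y)) + γ * ∑ y, qt (x, y) * Real.log (r y x) := by
      intro x
      rw [Finset.mul_sum, ← Finset.sum_add_distrib]
      exact Finset.sum_congr rfl fun y _ => by ring
    rw [Finset.sum_congr rfl fun x _ => e1x x, Finset.sum_add_distrib, ← Finset.mul_sum]
  rw [e1] at hAsum
  have hqtm1 : (∑ x, ∑ y, qt (x, y)) = 1 := by rw [← hqt1, Fintype.sum_prod_type]
  have hB : (δ * ∑ x, (∑ y, qt (x, y)) * Real.log (pX x))
      + (δ * ∑ x, (∑ y, qt (x, y)) * Real.log (S x))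
      - (∑ x, (∑ y, qt (x, y)) * Real.log (∑ y, qt (x, y))) ≤ Real.log T := by
    have hg := gibbs_scaled (fun x => ∑ y, qt (x, y)) (fun x => pX x ^ δ * S x ^ δ)
      (fun x => (hm x).le)
      (fun x => mul_pos (Real.rpow_pos_of_pos (hpXpos x) δ) (Real.rpow_pos_of_pos (hSpos x) δ))
      1 one_pos hqtm1
    rw [Real.log_one, mul_zero, one_mul, sub_zero, ← hTdef] at hg
    have hw : ∀ x, Real.log (pX x ^ δ * S x ^ δ)
        = δ * Real.log (pX x) + δ * Real.log (S x) := fun x => by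
      rw [Real.log_mul (ne_of_gt (Real.rpow_pos_of_pos (hpXpos x) δ))
          (ne_of_gt (Real.rpow_pos_of_pos (hSpos x) δ)),
        Real.log_rpow (hpXpos x), Real.log_rpow (hSpos x)]
    have he : (∑ x, (∑ y, qt (x, y)) * Real.log (pX x ^ δ * S x ^ δ))
        = (δ * ∑ x, (∑ y, qt (x, y)) * Real.log (pX x))
          + (δ * ∑ x, (∑ y, qt (x, y)) * Real.log (S x)) := by
      rw [Finset.mul_sum, Finset.mul_sum, ← Finset.sum_add_distrib]
      exact Finset.sum_congr rfl fun x _ => by rw [hw x]; ring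
    rw [he] at hg
    linarith
  have I1 := mul_le_mul_of_nonneg_left hAsum hβpos.le
  have I2 := mul_le_mul_of_nonneg_left hB (by linarith : (0:ℝ) ≤ β + 1)
  set U1 := ∑ x, ∑ y, qt (x, y) * Real.log (qt (x, y)) with hU1
  set U2 := ∑ x, ∑ y, qt (x, y) * Real.log (pYX x y) with hU2
  set U3 := ∑ x, ∑ y, qt (x, y) * Real.log (r y x) with hU3
  set V1 := ∑ x, (∑ y, qt (x, y)) * Real.log (∑ y, qt (x, y)) with hV1
  set V2 := ∑ x, (∑ y, qt (x, y)) * Real.log (pX x) with hV2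
  set V3 := ∑ x, (∑ y, qt (x, y)) * Real.log (S x) with hV3
  have eA : β * (U2 + γ * U3 - U1) = β * U2 + U3 - β * U1 := by
    linear_combination U3 * hβγ
  have eB : (β + 1) * (δ * V2 + δ * V3 - V1) = β * V2 + β * V3 - (β + 1) * V1 := by
    linear_combination (V2 + V3) * hδβ
  rw [eA] at I1
  rw [eB] at I2
  linarith [I1, I2]

/-- Alternating-maximization updating formulae for `F̃_α^{LP}(p_X, q̃_{X,Y}, r_{X|Y})`
when `α > 1`: (1) for fixed `(p_X, q̃_{X,Y})`, the maximizing reverse channel is the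
posterior of `q̃_{X,Y}`; (2) for fixed `(q̃_{X,Y}, r_{X|Y})` with `r` strictly positive,
the maximizing strictly positive `p_X` is the `X`-marginal of `q̃_{X,Y}`; (3) for fixed
`(p_X, r_{X|Y})` with `r` strictly positive, the maximizing strictly positive `q̃_{X,Y}`
is the product `q̂_X q̂_{Y|X}` of the stated tilted distributions. -/
theorem FtildeLP_max_updates_three {X Y : Type*} [Fintype X] [Fintype Y]
    [Nonempty X] [Nonempty Y]
    (α : ℝ) (hα : 1 < α)
    (pYX : X → Y → ℝ) (hpYX : ∀ x, IsPMF (pYX x)) (hpYXpos : ∀ x y, 0 < pYX x y) :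
    (∀ pX : X → ℝ, IsPMF pX → (∀ x, 0 < pX x) →
      ∀ qt : X × Y → ℝ, IsPMF qt → (∀ z, 0 < qt z) →
      ∀ r : Y → X → ℝ, (∀ y, IsPMF (r y)) →
        FtildeLP α pYX pX qt r ≤
        FtildeLP α pYX pX qt (fun y x => qt (x, y) / ∑ x', qt (x', y))) ∧
    (∀ qt : X × Y → ℝ, IsPMF qt → (∀ z, 0 < qt z) →
      ∀ r : Y → X → ℝ, (∀ y, IsPMF (r y)) → (∀ y x, 0 < r y x) →
      ∀ pX : X → ℝ, IsPMF pX → (∀ x, 0 < pX x) →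
        FtildeLP α pYX pX qt r ≤
        FtildeLP α pYX (fun x => ∑ y, qt (x, y)) qt r) ∧
    (∀ pX : X → ℝ, IsPMF pX → (∀ x, 0 < pX x) →
      ∀ r : Y → X → ℝ, (∀ y, IsPMF (r y)) → (∀ y x, 0 < r y x) →
      ∀ qt : X × Y → ℝ, IsPMF qt → (∀ z, 0 < qt z) →
        FtildeLP α pYX pX qt r ≤
        FtildeLP α pYX pX
          (fun z : X × Y =>
            (pX z.1 ^ (α / (2 * α - 1)) *
                (∑ y, pYX z.1 y * r y z.1 ^ (1 - 1 / α)) ^ (α / (2 * α - 1)) /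
              ∑ x', pX x' ^ (α / (2 * α - 1)) *
                (∑ y, pYX x' y * r y x' ^ (1 - 1 / α)) ^ (α / (2 * α - 1))) *
            (pYX z.1 z.2 * r z.2 z.1 ^ (1 - 1 / α) /
              ∑ y', pYX z.1 y' * r y' z.1 ^ (1 - 1 / α))) r) := by
  refine ⟨?_, ?_, ?_⟩
  · intro pX _ _ qt _ hqtpos r hr
    exact part1 α pYX pX qt hqtpos r hr
  · intro qt hqt hqtpos r _ hrpos pX hpX hpXpos
    exact part2 α hα pYX qt hqt hqtpos r hrpos pX hpX hpXpos
  · intro pX hpX hpXpos r _ hrpos qt hqt hqtpos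
    exact part3 α hα pYX hpYXpos pX hpXpos r hrpos qt hqt.2 hqtpos _ (fun z => rfl)
end

section
/- Let α ∈ (1,∞), let p_X be a strictly positive probability distribution on 𝒳, p_{Y|X} a channel with p_{Y|X}(y|x) > 0 for all x, y, and let q̃^{(0)}_{Y|X} be a channel with q̃^{(0)}_{Y|X}(y|x) > 0 for all x, y. Define recursively r^{(k)}_{X|Y}(x|y) := p_X(x) q̃^{(k)}_{Y|X}(y|x) / Σ_{x'} p_X(x') q̃^{(k)}_{Y|X}(y|x') and q̃^{(k+1)}_{Y|X}(y|x) := p_{Y|X}(y|x) r^{(k)}_{X|Y}(x|y)^{1−1/α} / Σ_{y'} p_{Y|X}(y'|x) r^{(k)}_{X|Y}(x|y')^{1−1/α}. Then (a) the sequence of objective values is nondecreasing: F̃_α^C(q̃^{(k)}_{Y|X}, r^{(k)}_{X|Y}) ≤ F̃_α^C(q̃^{(k+1)}_{Y|X}, r^{(k)}_{X|Y}) ≤ F̃_α^C(q̃^{(k+1)}_{Y|X}, r^{(k+1)}_{X|Y}) ≤ I_α^C for all k ≥ 0, and (b) lim_{k→∞} F̃_α^C(q̃^{(k+1)}_{Y|X},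 r^{(k)}_{X|Y}) = I_α^C, the Augustin–Csiszár mutual information of order α. -/
/-- Rényi divergence of order `α`, valued in `EReal` (equal to `⊤` when `α > 1` and
`q` vanishes somewhere on the support of `p`). -/
noncomputable def renyiDE {Z : Type*} [Fintype Z] (α : ℝ) (p q : Z → ℝ) : EReal :=
  if 1 < α ∧ ∃ z, p z ≠ 0 ∧ q z = 0 then ⊤
  else (((1 / (α - 1)) * Real.log (∑ z, p z ^ α * q z ^ (1 - α)) : ℝ) : EReal)

/-- Augustin--Csiszár mutual information of order `α`. -/
noncomputable def acMI {X Y : Type*} [Fintype X] [Fintype Y]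
    (α : ℝ) (pX : X → ℝ) (pYX : X → Y → ℝ) : EReal :=
  sInf {v : EReal | ∃ qY : Y → ℝ, IsPMF qY ∧
    v = ∑ x, ((pX x : ℝ) : EReal) * renyiDE α (fun y => pYX x y) qY}

/-- Posterior reverse channel: `r(x|y) = p_X(x) q̃(y|x) / Σ_{x'} p_X(x') q̃(y|x')`. -/
noncomputable def rpost {X Y : Type*} [Fintype X] (pX : X → ℝ) (qt : X → Y → ℝ) :
    Y → X → ℝ :=
  fun y x => pX x * qt x y / ∑ x', pX x' * qt x' y

/-- The AO sequence of channels: `q̃^{(0)}` given, and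
`q̃^{(k+1)}(y|x) = p_{Y|X}(y|x) r^{(k)}(x|y)^{1−1/α} / Σ_{y'} (…)`
where `r^{(k)} = rpost pX q̃^{(k)}`. -/
noncomputable def qtseq {X Y : Type*} [Fintype X] [Fintype Y]
    (α : ℝ) (pX : X → ℝ) (pYX : X → Y → ℝ) (q0 : X → Y → ℝ) : ℕ → X → Y → ℝ
  | 0 => q0
  | k + 1 => fun x y =>
      pYX x y * rpost pX (qtseq α pX pYX q0 k) y x ^ (1 - 1 / α) /
        ∑ y', pYX x y' * rpost pX (qtseq α pX pYX q0 k) y' x ^ (1 - 1 / α)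

set_option linter.unusedSectionVars false
set_option linter.unusedVariables false
set_option linter.deprecated false
namespace AOaux

open Real Finset

/-- generalized Gibbs: for a positive pmf `u` and positive `v`,
`∑ u log (v/u) ≤ log (∑ v)`. -/
lemma gibbs {Z : Type*} [Fintype Z] [Nonempty Z] {u v : Z → ℝ}
    (hsum : ∑ z, u z = 1) (hupos : ∀ z, 0 < u z) (hv : ∀ z, 0 < v z) :
    ∑ z, u z * Real.log (v z / u z) ≤ Real.log (∑ z, v z) := by
  have hS : 0 < ∑ z, v z := Finset.sum_pos (fun z _ => hv z) univ_nonempty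
  set S := ∑ z, v z with hSdef
  have key : ∀ z, u z * Real.log (v z / u z) ≤ v z / S - u z + u z * Real.log S := by
    intro z
    have h0 : 0 < v z / (u z * S) := div_pos (hv z) (mul_pos (hupos z) hS)
    have h1 : Real.log (v z / (u z * S)) ≤ v z / (u z * S) - 1 :=
      Real.log_le_sub_one_of_pos h0
    have h2 : Real.log (v z / (u z * S)) = Real.log (v z / u z) - Real.log S := by
      rw [div_mul_eq_div_div, Real.log_div (ne_of_gt (div_pos (hv z) (hupos z))) (ne_of_gt hS)]
    rw [h2] at h1
    have h3 := mul_le_mul_of_nonneg_left h1 (le_of_lt (hupos z))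
    have h4 : u z * (v z / (u z * S) - 1) = v z / S - u z := by
      have hu' := ne_of_gt (hupos z); have hS' := ne_of_gt hS
      field_simp
    rw [h4] at h3
    nlinarith [h3]
  calc ∑ z, u z * Real.log (v z / u z) ≤ ∑ z, (v z / S - u z + u z * Real.log S) :=
        Finset.sum_le_sum fun z _ => key z
    _ = (∑ z, v z) / S - (∑ z, u z) + (∑ z, u z) * Real.log S := by
        rw [Finset.sum_add_distrib, Finset.sum_sub_distrib, ← Finset.sum_div, ← Finset.sum_mul]
    _ = Real.log S := by rw [hsum, div_self (ne_of_gt hS)]; ring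

lemma klD_nonneg {Z : Type*} [Fintype Z] [Nonempty Z] {u v : Z → ℝ}
    (hu : ∑ z, u z = 1) (hupos : ∀ z, 0 < u z) (hv : ∑ z, v z = 1) (hvpos : ∀ z, 0 < v z) :
    0 ≤ klD u v := by
  have h := gibbs hu hupos hvpos
  rw [hv, Real.log_one] at h
  have : klD u v = -∑ z, u z * Real.log (v z / u z) := by
    unfold klD
    rw [← Finset.sum_neg_distrib]
    refine Finset.sum_congr rfl fun z _ => ?_
    rw [show u z / v z = (v z / u z)⁻¹ by rw [inv_div], Real.log_inv]; ring
  rw [this]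
  linarith


section AO

variable {X Y : Type*} [Fintype X] [Fintype Y] [Nonempty X] [Nonempty Y]

/-- `W(x) = ∑_y p(y|x) r(x|y)^{1-1/α}`. -/
noncomputable def Wf (α : ℝ) (pYX : X → Y → ℝ) (r : Y → X → ℝ) (x : X) : ℝ :=
  ∑ y, pYX x y * r y x ^ (1 - 1/α)

/-- `G(r) = max over q̃ of F̃(q̃, r)`. -/
noncomputable def Gf (α : ℝ) (pX : X → ℝ) (pYX : X → Y → ℝ) (r : Y → X → ℝ) : ℝ :=
  ∑ x, pX x * (α/(α-1) * Real.log (Wf α pYX r x) - Real.log (pX x))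

noncomputable def Zf (α : ℝ) (pYX : X → Y → ℝ) (q : Y → ℝ) (x : X) : ℝ :=
  ∑ y, pYX x y ^ α * q y ^ (1-α)

/-- `Φ(q) = ∑_x pX(x) D_α(p(·|x) ‖ q)`. -/
noncomputable def Phi (α : ℝ) (pX : X → ℝ) (pYX : X → Y → ℝ) (q : Y → ℝ) : ℝ :=
  ∑ x, pX x * ((α-1)⁻¹ * Real.log (Zf α pYX q x))

noncomputable def smarg (pX : X → ℝ) (qt : X → Y → ℝ) (y : Y) : ℝ := ∑ x, pX x * qt x y

noncomputable def nextq (α : ℝ) (pYX : X → Y → ℝ) (r : Y → X → ℝ) : X → Y → ℝ :=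
  fun x y => pYX x y * r y x ^ (1 - 1/α) / Wf α pYX r x

noncomputable def qgib (α : ℝ) (pYX : X → Y → ℝ) (q : Y → ℝ) : X → Y → ℝ :=
  fun x y => pYX x y ^ α * q y ^ (1-α) / Zf α pYX q x

variable {α : ℝ} {pX : X → ℝ} {pYX : X → Y → ℝ}

section facts
variable (hα : 1 < α)
include hα

lemma hαpos : (0:ℝ) < α := lt_trans one_pos hα
lemma hα1 : (0:ℝ) < α - 1 := by linarith
lemma hβpos : (0:ℝ) < 1 - 1/α := by
  have h := hαpos hα
  rw [sub_pos, div_lt_one h]; linarith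
lemma hcpos : (0:ℝ) < α/(α-1) := div_pos (hαpos hα) (hα1 hα)
lemma hcβ : (α/(α-1)) * (1 - 1/α) = 1 := by
  have h1 := (hαpos hα).ne'
  have h2 := (hα1 hα).ne'
  field_simp
lemma hc1 : (1:ℝ) ≤ α/(α-1) := by
  rw [le_div_iff₀ (hα1 hα)]; linarith

end facts

lemma Wf_pos (hβ : 0 < 1 - 1/α) (hppos : ∀ x y, 0 < pYX x y) {r : Y → X → ℝ}
    (hrpos : ∀ y x, 0 < r y x) (x : X) : 0 < Wf α pYX r x :=
  Finset.sum_pos (fun y _ => mul_pos (hppos x y) (Real.rpow_pos_of_pos (hrpos y x) _))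
    Finset.univ_nonempty

lemma Zf_pos (hppos : ∀ x y, 0 < pYX x y) {q : Y → ℝ} (hq : ∀ y, 0 < q y) (x : X) :
    0 < Zf α pYX q x :=
  Finset.sum_pos (fun y _ => mul_pos (Real.rpow_pos_of_pos (hppos x y) _)
    (Real.rpow_pos_of_pos (hq y) _)) Finset.univ_nonempty

lemma nextq_pos (hβ : 0 < 1 - 1/α) (hppos : ∀ x y, 0 < pYX x y) {r : Y → X → ℝ}
    (hrpos : ∀ y x, 0 < r y x) (x : X) (y : Y) : 0 < nextq α pYX r x y :=
  div_pos (mul_pos (hppos x y) (Real.rpow_pos_of_pos (hrpos y x) _))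
    (Wf_pos hβ hppos hrpos x)

lemma nextq_sum (hβ : 0 < 1 - 1/α) (hppos : ∀ x y, 0 < pYX x y) {r : Y → X → ℝ}
    (hrpos : ∀ y x, 0 < r y x) (x : X) : ∑ y, nextq α pYX r x y = 1 := by
  unfold nextq
  rw [← Finset.sum_div]
  exact div_self (ne_of_gt (Wf_pos hβ hppos hrpos x))

lemma smarg_pos (hpXpos : ∀ x, 0 < pX x) {qt : X → Y → ℝ} (hqpos : ∀ x y, 0 < qt x y)
    (y : Y) : 0 < smarg pX qt y :=
  Finset.sum_pos (fun x _ => mul_pos (hpXpos x) (hqpos x y)) Finset.univ_nonempty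

lemma smarg_sum (hpX : ∑ x, pX x = 1) {qt : X → Y → ℝ} (hqt : ∀ x, ∑ y, qt x y = 1) :
    ∑ y, smarg pX qt y = 1 := by
  unfold smarg
  rw [Finset.sum_comm]
  calc ∑ x, ∑ y, pX x * qt x y = ∑ x, pX x * ∑ y, qt x y := by
        refine Finset.sum_congr rfl fun x _ => ?_; rw [Finset.mul_sum]
    _ = 1 := by simp only [hqt, mul_one]; exact hpX

lemma rpost_eq {qt : X → Y → ℝ} (y : Y) (x : X) :
    rpost pX qt y x = pX x * qt x y / smarg pX qt y := rfl

lemma rpost_pos (hpXpos : ∀ x, 0 < pX x) {qt : X → Y → ℝ} (hqpos : ∀ x y, 0 < qt x y)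
    (y : Y) (x : X) : 0 < rpost pX qt y x :=
  div_pos (mul_pos (hpXpos x) (hqpos x y)) (smarg_pos hpXpos hqpos y)

lemma rpost_sum (hpXpos : ∀ x, 0 < pX x) {qt : X → Y → ℝ} (hqpos : ∀ x y, 0 < qt x y)
    (y : Y) : ∑ x, rpost pX qt y x = 1 := by
  unfold rpost
  rw [← Finset.sum_div]
  exact div_self (ne_of_gt (smarg_pos hpXpos hqpos y))

lemma qtseq_succ (α : ℝ) (pX : X → ℝ) (pYX : X → Y → ℝ) (q0 : X → Y → ℝ) (k : ℕ) :
    qtseq α pX pYX q0 (k+1) = nextq α pYX (rpost pX (qtseq α pX pYX q0 k)) := rfl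

/-- expansion of `F̃` as a double sum of logarithms. -/
lemma expand_F (hα : 1 < α) (hpXpos : ∀ x, 0 < pX x)
    (hppos : ∀ x y, 0 < pYX x y) {qt : X → Y → ℝ} {r : Y → X → ℝ}
    (hqpos : ∀ x y, 0 < qt x y) (hrpos : ∀ y x, 0 < r y x) :
    FtildeC α pX pYX qt r = ∑ x, ∑ y, pX x * qt x y *
      (-(α/(α-1)) * Real.log (qt x y) + (α/(α-1)) * Real.log (pYX x y)
        + Real.log (r y x) - Real.log (pX x)) := by
  have h1 : α / (1 - α) = -(α/(α-1)) := by
    have h : (1:ℝ) - α = -(α-1) := by ring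
    rw [h, div_neg]
  unfold FtildeC klD
  rw [Fintype.sum_prod_type, h1]
  dsimp only
  rw [show ∀ S T : ℝ, -(α/(α-1)) * S + T = T - α/(α-1) * S from fun S T => by ring,
    Finset.mul_sum, ← Finset.sum_sub_distrib]
  refine Finset.sum_congr rfl fun x _ => ?_
  rw [Finset.mul_sum, ← Finset.sum_sub_distrib]
  refine Finset.sum_congr rfl fun y _ => ?_
  have hq := (hqpos x y).ne'
  have hp := (hppos x y).ne'
  have hr := (hrpos y x).ne'
  have hx := (hpXpos x).ne'
  rw [mul_div_mul_left _ _ hx, Real.log_div hq hp, Real.log_div hr hx]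
  ring

/-- difference of `F̃` in the reverse-channel argument. -/
lemma F_diff_r (hα : 1 < α) (hpXpos : ∀ x, 0 < pX x) (hppos : ∀ x y, 0 < pYX x y)
    {qt : X → Y → ℝ} {r r' : Y → X → ℝ} (hqpos : ∀ x y, 0 < qt x y)
    (hrpos : ∀ y x, 0 < r y x) (hrpos' : ∀ y x, 0 < r' y x) :
    FtildeC α pX pYX qt r' - FtildeC α pX pYX qt r =
      ∑ x, ∑ y, pX x * qt x y * (Real.log (r' y x) - Real.log (r y x)) := by
  rw [expand_F hα hpXpos hppos hqpos hrpos, expand_F hα hpXpos hppos hqpos hrpos',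
    ← Finset.sum_sub_distrib]
  refine Finset.sum_congr rfl fun x _ => ?_
  rw [← Finset.sum_sub_distrib]
  refine Finset.sum_congr rfl fun y _ => ?_
  ring

/-- Gibbs step in `q̃` : `F̃(q̃, r) ≤ G(r)`. -/
lemma F_le_G (hα : 1 < α) (hpXpos : ∀ x, 0 < pX x) (hppos : ∀ x y, 0 < pYX x y)
    {qt : X → Y → ℝ} {r : Y → X → ℝ}
    (hqt : ∀ x, ∑ y, qt x y = 1) (hqpos : ∀ x y, 0 < qt x y)
    (hrpos : ∀ y x, 0 < r y x) :
    FtildeC α pX pYX qt r ≤ Gf α pX pYX r := by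
  rw [expand_F hα hpXpos hppos hqpos hrpos]
  unfold Gf
  refine Finset.sum_le_sum fun x _ => ?_
  have hWx := Wf_pos (hβpos hα) hppos hrpos x
  have key : ∀ y, pX x * qt x y *
      (-(α/(α-1)) * Real.log (qt x y) + (α/(α-1)) * Real.log (pYX x y)
        + Real.log (r y x) - Real.log (pX x))
      = pX x * ((α/(α-1)) * (qt x y *
          Real.log ((pYX x y * r y x ^ (1 - 1/α)) / qt x y))
          - qt x y * Real.log (pX x)) := by
    intro y
    rw [Real.log_div (mul_pos (hppos x y) (Real.rpow_pos_of_pos (hrpos y x) _)).ne'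
        (hqpos x y).ne',
      Real.log_mul (hppos x y).ne' (Real.rpow_pos_of_pos (hrpos y x) _).ne',
      Real.log_rpow (hrpos y x)]
    linear_combination (-(pX x * qt x y * Real.log (r y x))) * (hcβ hα)
  rw [Finset.sum_congr rfl fun y _ => key y, ← Finset.mul_sum, Finset.sum_sub_distrib,
    ← Finset.mul_sum, ← Finset.sum_mul, hqt x, one_mul]
  have hgib : ∑ y, qt x y * Real.log ((pYX x y * r y x ^ (1 - 1/α)) / qt x y)
      ≤ Real.log (Wf α pYX r x) := by
    exact gibbs (hqt x) (fun y => hqpos x y)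
      (fun y => mul_pos (hppos x y) (Real.rpow_pos_of_pos (hrpos y x) _))
  have h2 : (α/(α-1)) * ∑ y, qt x y * Real.log ((pYX x y * r y x ^ (1 - 1/α)) / qt x y)
      ≤ (α/(α-1)) * Real.log (Wf α pYX r x) :=
    mul_le_mul_of_nonneg_left hgib (hcpos hα).le
  have := mul_le_mul_of_nonneg_left (sub_le_sub_right h2 (Real.log (pX x))) (hpXpos x).le
  linarith [this]

/-- the optimal `q̃` for fixed `r` attains `G(r)`. -/
lemma F_nextq_eq_G (hα : 1 < α) (hpXpos : ∀ x, 0 < pX x) (hppos : ∀ x y, 0 < pYX x y)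
    {r : Y → X → ℝ} (hrpos : ∀ y x, 0 < r y x) :
    FtildeC α pX pYX (nextq α pYX r) r = Gf α pX pYX r := by
  rw [expand_F hα hpXpos hppos (nextq_pos (hβpos hα) hppos hrpos) hrpos]
  unfold Gf
  refine Finset.sum_congr rfl fun x _ => ?_
  have hWx := Wf_pos (hβpos hα) hppos hrpos x
  have key : ∀ y, pX x * nextq α pYX r x y *
      (-(α/(α-1)) * Real.log (nextq α pYX r x y) + (α/(α-1)) * Real.log (pYX x y)
        + Real.log (r y x) - Real.log (pX x))
      = nextq α pYX r x y *
          (pX x * (α/(α-1) * Real.log (Wf α pYX r x) - Real.log (pX x))) := by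
    intro y
    have hlog : Real.log (nextq α pYX r x y) =
        Real.log (pYX x y) + (1 - 1/α) * Real.log (r y x) - Real.log (Wf α pYX r x) := by
      unfold nextq
      rw [Real.log_div (mul_pos (hppos x y) (Real.rpow_pos_of_pos (hrpos y x) _)).ne'
          hWx.ne',
        Real.log_mul (hppos x y).ne' (Real.rpow_pos_of_pos (hrpos y x) _).ne',
        Real.log_rpow (hrpos y x)]
    rw [hlog]
    linear_combination (-(pX x * nextq α pYX r x y * Real.log (r y x))) * (hcβ hα)
  rw [Finset.sum_congr rfl fun y _ => key y, ← Finset.sum_mul,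
    nextq_sum (hβpos hα) hppos hrpos x, one_mul]

/-- Gibbs step in `r` : `F̃(q̃, r) ≤ F̃(q̃, rpost q̃)` when the rows of `r` are pmfs. -/
lemma F_le_F_rpost (hα : 1 < α) (hpXpos : ∀ x, 0 < pX x) (hppos : ∀ x y, 0 < pYX x y)
    {qt : X → Y → ℝ} {r : Y → X → ℝ}
    (hqpos : ∀ x y, 0 < qt x y)
    (hrpos : ∀ y x, 0 < r y x) (hrsum : ∀ y, ∑ x, r y x = 1) :
    FtildeC α pX pYX qt r ≤ FtildeC α pX pYX qt (rpost pX qt) := by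
  have hrp : ∀ y x, 0 < rpost pX qt y x := rpost_pos hpXpos hqpos
  rw [← sub_nonneg, F_diff_r hα hpXpos hppos hqpos hrpos hrp, Finset.sum_comm]
  refine Finset.sum_nonneg fun y _ => ?_
  have hs := smarg_pos hpXpos hqpos y
  have h1 : ∀ x, pX x * qt x y * (Real.log (rpost pX qt y x) - Real.log (r y x))
      = smarg pX qt y *
        (rpost pX qt y x * (-(Real.log (r y x / rpost pX qt y x)))) := by
    intro x
    rw [rpost_eq, Real.log_div (hrpos y x).ne'
      (div_pos (mul_pos (hpXpos x) (hqpos x y)) hs).ne']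
    have h2 : smarg pX qt y * (pX x * qt x y / smarg pX qt y) = pX x * qt x y := by
      field_simp
    linear_combination
      (Real.log (r y x) - Real.log (pX x * qt x y / smarg pX qt y)) * h2
  rw [Finset.sum_congr rfl fun x _ => h1 x, ← Finset.mul_sum]
  have h2 : ∑ x, rpost pX qt y x * Real.log (r y x / rpost pX qt y x) ≤ 0 := by
    have := gibbs (rpost_sum hpXpos hqpos y) (fun x => hrp y x) (fun x => hrpos y x)
    rwa [hrsum y, Real.log_one] at this
  have h3 : 0 ≤ ∑ x, rpost pX qt y x * (-(Real.log (r y x / rpost pX qt y x))) := by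
    simp only [mul_neg, Finset.sum_neg_distrib]
    linarith
  positivity

/-- Hölder + Jensen: `G(r) ≤ Φ(q)` for every positive pmf `q`. -/
lemma G_le_Phi (hα : 1 < α) (hpX : ∑ x, pX x = 1) (hpXpos : ∀ x, 0 < pX x)
    (hppos : ∀ x y, 0 < pYX x y)
    {q : Y → ℝ} (hq : ∑ y, q y = 1) (hqpos : ∀ y, 0 < q y)
    {r : Y → X → ℝ} (hrpos : ∀ y x, 0 < r y x) (hrsum : ∀ y, ∑ x, r y x = 1) :
    Gf α pX pYX r ≤ Phi α pX pYX q := by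
  have hne1 := (hαpos hα).ne'
  have hne2 := (hα1 hα).ne'
  have hconj : Real.HolderConjugate α (α/(α-1)) := (Real.holderConjugate_iff_eq_conjExponent hα).2 rfl
  set V : X → ℝ := fun x => ∑ y, q y * r y x with hV
  have hVpos : ∀ x, 0 < V x := fun x =>
    Finset.sum_pos (fun y _ => mul_pos (hqpos y) (hrpos y x)) Finset.univ_nonempty
  have hVsum : ∑ x, V x = 1 := by
    rw [hV, Finset.sum_comm]
    calc ∑ y, ∑ x, q y * r y x = ∑ y, q y * ∑ x, r y x := by
          exact Finset.sum_congr rfl fun y _ => (Finset.mul_sum _ _ _).symm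
      _ = 1 := by simp only [hrsum, mul_one]; exact hq
  have step1 : ∀ x, (α/(α-1)) * Real.log (Wf α pYX r x) ≤
      (α-1)⁻¹ * Real.log (Zf α pYX q x) + Real.log (V x) := by
    intro x
    have hZx := Zf_pos (α := α) hppos hqpos x
    have hWx := Wf_pos (hβpos hα) hppos hrpos x
    have hold : Wf α pYX r x ≤ (Zf α pYX q x) ^ (1/α) * (V x) ^ (1 - 1/α) := by
      have hh := Real.inner_le_Lp_mul_Lq_of_nonneg Finset.univ hconj
        (f := fun y => pYX x y * q y ^ ((1-α)/α))
        (g := fun y => (q y * r y x) ^ (1 - 1/α))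
        (fun y _ => (mul_pos (hppos x y) (Real.rpow_pos_of_pos (hqpos y) _)).le)
        (fun y _ => (Real.rpow_pos_of_pos (mul_pos (hqpos y) (hrpos y x)) _).le)
      have E1 : ∀ y : Y, (pYX x y * q y ^ ((1-α)/α)) * ((q y * r y x) ^ (1 - 1/α))
          = pYX x y * r y x ^ (1 - 1/α) := by
        intro y
        rw [Real.mul_rpow (hqpos y).le (hrpos y x).le]
        have e0 : q y ^ ((1-α)/α) * q y ^ (1 - 1/α) = 1 := by
          rw [← Real.rpow_add (hqpos y)]
          have : (1-α)/α + (1 - 1/α) = 0 := by field_simp; ring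
          rw [this, Real.rpow_zero]
        calc (pYX x y * q y ^ ((1-α)/α)) * (q y ^ (1 - 1/α) * r y x ^ (1 - 1/α))
            = pYX x y * ((q y ^ ((1-α)/α) * q y ^ (1 - 1/α)) * r y x ^ (1 - 1/α)) := by
              ring
          _ = pYX x y * r y x ^ (1 - 1/α) := by rw [e0, one_mul]
      have E2 : ∀ y : Y, (pYX x y * q y ^ ((1-α)/α)) ^ α = pYX x y ^ α * q y ^ (1-α) := by
        intro y
        rw [Real.mul_rpow (hppos x y).le (Real.rpow_pos_of_pos (hqpos y) _).le,
          ← Real.rpow_mul (hqpos y).le]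
        congr 2
        field_simp
      have E3 : ∀ y : Y, ((q y * r y x) ^ (1 - 1/α)) ^ (α/(α-1)) = q y * r y x := by
        intro y
        rw [← Real.rpow_mul (mul_pos (hqpos y) (hrpos y x)).le]
        have : (1 - 1/α) * (α/(α-1)) = 1 := by rw [mul_comm]; exact hcβ hα
        rw [this, Real.rpow_one]
      rw [Finset.sum_congr rfl fun y _ => E1 y, Finset.sum_congr rfl fun y _ => E2 y,
        Finset.sum_congr rfl fun y _ => E3 y] at hh
      have e4 : 1 / (α/(α-1)) = 1 - 1/α := by
        rw [one_div_div, sub_div, div_self hne1]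
      rw [e4] at hh
      exact hh
    have hlog := Real.log_le_log hWx hold
    rw [Real.log_mul (Real.rpow_pos_of_pos hZx _).ne' (Real.rpow_pos_of_pos (hVpos x) _).ne',
      Real.log_rpow hZx, Real.log_rpow (hVpos x)] at hlog
    have h4 := mul_le_mul_of_nonneg_left hlog (hcpos hα).le
    have e5 : (α/(α-1)) * (1/α) = (α-1)⁻¹ := by field_simp
    have e6 : α/(α-1) * (1/α * Real.log (Zf α pYX q x) + (1 - 1/α) * Real.log (V x))
        = (α-1)⁻¹ * Real.log (Zf α pYX q x) + Real.log (V x) := by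
      linear_combination Real.log (Zf α pYX q x) * e5 + Real.log (V x) * (hcβ hα)
    linarith [h4, e6]
  have main : Gf α pX pYX r ≤ Phi α pX pYX q + ∑ x, pX x * Real.log (V x / pX x) := by
    unfold Gf Phi
    rw [← Finset.sum_add_distrib]
    refine Finset.sum_le_sum fun x _ => ?_
    rw [Real.log_div (hVpos x).ne' (hpXpos x).ne']
    nlinarith [mul_le_mul_of_nonneg_left (step1 x) (hpXpos x).le]
  have hJ : ∑ x, pX x * Real.log (V x / pX x) ≤ 0 := by
    have := gibbs hpX hpXpos hVpos
    rwa [hVsum, Real.log_one] at this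
  linarith

lemma qgib_pos (hppos : ∀ x y, 0 < pYX x y) {q : Y → ℝ} (hqpos : ∀ y, 0 < q y)
    (x : X) (y : Y) : 0 < qgib α pYX q x y :=
  div_pos (mul_pos (Real.rpow_pos_of_pos (hppos x y) _) (Real.rpow_pos_of_pos (hqpos y) _))
    (Zf_pos (α := α) hppos hqpos x)

lemma qgib_sum (hppos : ∀ x y, 0 < pYX x y) {q : Y → ℝ} (hqpos : ∀ y, 0 < q y)
    (x : X) : ∑ y, qgib α pYX q x y = 1 := by
  unfold qgib
  rw [← Finset.sum_div]
  exact div_self (ne_of_gt (Zf_pos (α := α) hppos hqpos x))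

/-- rewriting `pX x * klD (qs x) v` as a sum of log differences. -/
lemma klD_mul {qs : X → Y → ℝ} (hqspos : ∀ x y, 0 < qs x y) {v : Y → ℝ}
    (hv : ∀ y, 0 < v y) (x : X) :
    pX x * klD (qs x) v = ∑ y, pX x * qs x y * (Real.log (qs x y) - Real.log (v y)) := by
  unfold klD
  rw [Finset.mul_sum]
  refine Finset.sum_congr rfl fun y _ => ?_
  rw [Real.log_div (hqspos x y).ne' (hv y).ne']
  ring

/-- summing a function constant in `y` against the rows of a channel. -/
lemma double_const {qs : X → Y → ℝ} (hqs : ∀ x, ∑ y, qs x y = 1) (A : X → ℝ) :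
    ∑ x, ∑ y, pX x * qs x y * A x = ∑ x, pX x * A x := by
  refine Finset.sum_congr rfl fun x _ => ?_
  calc ∑ y, pX x * qs x y * A x = (pX x * A x) * ∑ y, qs x y := by
        rw [Finset.mul_sum]; exact Finset.sum_congr rfl fun y _ => by ring
    _ = pX x * A x := by rw [hqs x, mul_one]

/-- identity: value of `F̃` at the Gibbs channel of `q`. -/
lemma J_qgib (hα : 1 < α) (hpX : ∑ x, pX x = 1) (hpXpos : ∀ x, 0 < pX x)
    (hppos : ∀ x y, 0 < pYX x y) {q : Y → ℝ} (hq : ∑ y, q y = 1) (hqpos : ∀ y, 0 < q y) :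
    FtildeC α pX pYX (qgib α pYX q) (rpost pX (qgib α pYX q)) =
      Phi α pX pYX q - klD (smarg pX (qgib α pYX q)) q := by
  have hne1 := (hαpos hα).ne'
  have hne2 := (hα1 hα).ne'
  set g := qgib α pYX q with hg
  have hgpos : ∀ x y, 0 < g x y := qgib_pos hppos hqpos
  have hgsum : ∀ x, ∑ y, g x y = 1 := qgib_sum hppos hqpos
  have hspos : ∀ y, 0 < smarg pX g y := smarg_pos hpXpos hgpos
  have hrpos : ∀ y x, 0 < rpost pX g y x := rpost_pos hpXpos hgpos
  have k1 : (1 - α/(α-1)) * α + α/(α-1) = 0 := by field_simp; ring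
  have k2 : (1 - α/(α-1)) * (1-α) = 1 := by field_simp; ring
  have k3 : α/(α-1) - 1 = (α-1)⁻¹ := by
    rw [div_sub' hne2, div_eq_iff hne2]; field_simp; ring
  have key : ∀ x y, pX x * g x y *
      (-(α/(α-1)) * Real.log (g x y) + (α/(α-1)) * Real.log (pYX x y)
        + Real.log (rpost pX g y x) - Real.log (pX x))
      = pX x * g x y * ((α-1)⁻¹ * Real.log (Zf α pYX q x))
        + pX x * g x y * (Real.log (q y) - Real.log (smarg pX g y)) := by
    intro x y
    have hlg : Real.log (g x y) = α * Real.log (pYX x y) + (1-α) * Real.log (q y)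
        - Real.log (Zf α pYX q x) := by
      rw [hg]
      unfold qgib
      rw [Real.log_div (mul_pos (Real.rpow_pos_of_pos (hppos x y) _)
          (Real.rpow_pos_of_pos (hqpos y) _)).ne' (Zf_pos (α := α) hppos hqpos x).ne',
        Real.log_mul (Real.rpow_pos_of_pos (hppos x y) _).ne'
          (Real.rpow_pos_of_pos (hqpos y) _).ne',
        Real.log_rpow (hppos x y), Real.log_rpow (hqpos y)]
    have hlr : Real.log (rpost pX g y x)
        = Real.log (pX x) + Real.log (g x y) - Real.log (smarg pX g y) := by
      rw [rpost_eq, Real.log_div (mul_pos (hpXpos x) (hgpos x y)).ne' (hspos y).ne',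
        Real.log_mul (hpXpos x).ne' (hgpos x y).ne']
    rw [hlr, hlg]
    linear_combination (pX x * g x y * Real.log (pYX x y)) * k1
      + (pX x * g x y * Real.log (q y)) * k2
      + (pX x * g x y * Real.log (Zf α pYX q x)) * k3
  rw [expand_F hα hpXpos hppos hgpos hrpos,
    Finset.sum_congr rfl fun x _ => Finset.sum_congr rfl fun y _ => key x y]
  have hsplit : ∀ x : X, ∑ y, (pX x * g x y * ((α-1)⁻¹ * Real.log (Zf α pYX q x))
      + pX x * g x y * (Real.log (q y) - Real.log (smarg pX g y)))
      = (pX x * ((α-1)⁻¹ * Real.log (Zf α pYX q x))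
        + ∑ y, pX x * g x y * (Real.log (q y) - Real.log (smarg pX g y))) := by
    intro x
    rw [Finset.sum_add_distrib]
    congr 1
    calc ∑ y, pX x * g x y * ((α-1)⁻¹ * Real.log (Zf α pYX q x))
        = (pX x * ((α-1)⁻¹ * Real.log (Zf α pYX q x))) * ∑ y, g x y := by
          rw [Finset.mul_sum]; exact Finset.sum_congr rfl fun y _ => by ring
      _ = _ := by rw [hgsum x, mul_one]
  rw [Finset.sum_congr rfl fun x _ => hsplit x, Finset.sum_add_distrib]
  have hT2 : ∑ x, ∑ y, pX x * g x y * (Real.log (q y) - Real.log (smarg pX g y))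
      = - klD (smarg pX g) q := by
    rw [Finset.sum_comm]
    unfold klD
    rw [← Finset.sum_neg_distrib]
    refine Finset.sum_congr rfl fun y _ => ?_
    rw [Real.log_div (hspos y).ne' (hqpos y).ne']
    calc ∑ x, pX x * g x y * (Real.log (q y) - Real.log (smarg pX g y))
        = (∑ x, pX x * g x y) * (Real.log (q y) - Real.log (smarg pX g y)) := by
          rw [Finset.sum_mul]
      _ = - (smarg pX g y * (Real.log (smarg pX g y) - Real.log (q y))) := by
          rw [show (∑ x, pX x * g x y) = smarg pX g y from rfl]; ring
  rw [hT2]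
  unfold Phi
  ring

/-- key telescoping inequality of the Arimoto-type convergence proof. -/
lemma telescope (hα : 1 < α) (hpX : ∑ x, pX x = 1) (hpXpos : ∀ x, 0 < pX x)
    (hppos : ∀ x y, 0 < pYX x y) {qt qs : X → Y → ℝ}
    (hqt : ∀ x, ∑ y, qt x y = 1) (hqtpos : ∀ x y, 0 < qt x y)
    (hqs : ∀ x, ∑ y, qs x y = 1) (hqspos : ∀ x y, 0 < qs x y) :
    FtildeC α pX pYX qs (rpost pX qs) - Gf α pX pYX (rpost pX qt) ≤
      (α/(α-1)) * ∑ x, pX x * klD (qs x) (qt x)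
      - (α/(α-1)) * ∑ x, pX x * klD (qs x) (nextq α pYX (rpost pX qt) x) := by
  set r := rpost pX qt with hr
  have hrpos : ∀ y x, 0 < r y x := rpost_pos hpXpos hqtpos
  have hrsum : ∀ y, ∑ x, r y x = 1 := rpost_sum hpXpos hqtpos
  set q' := nextq α pYX r with hq'
  have hq'pos : ∀ x y, 0 < q' x y := nextq_pos (hβpos hα) hppos hrpos
  have hWpos : ∀ x, 0 < Wf α pYX r x := Wf_pos (hβpos hα) hppos hrpos
  have hrspos : ∀ y x, 0 < rpost pX qs y x := rpost_pos hpXpos hqspos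
  have hsspos : ∀ y, 0 < smarg pX qs y := smarg_pos hpXpos hqspos
  have hstpos : ∀ y, 0 < smarg pX qt y := smarg_pos hpXpos hqtpos
  have lhs_eq : (α/(α-1)) * ∑ x, pX x * klD (qs x) (q' x)
      = ∑ x, ∑ y, pX x * qs x y *
          ((α/(α-1)) * (Real.log (qs x y) - Real.log (q' x y))) := by
    rw [Finset.mul_sum]
    refine Finset.sum_congr rfl fun x _ => ?_
    rw [klD_mul hqspos (fun y => hq'pos x y) x, Finset.mul_sum]
    exact Finset.sum_congr rfl fun y _ => by ring
  have gf_eq : Gf α pX pYX r = ∑ x, ∑ y, pX x * qs x y *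
      (α/(α-1) * Real.log (Wf α pYX r x) - Real.log (pX x)) := (double_const hqs _).symm
  have idA : (α/(α-1)) * ∑ x, pX x * klD (qs x) (q' x)
      = Gf α pX pYX r - FtildeC α pX pYX qs (rpost pX qs)
        + ∑ x, ∑ y, pX x * qs x y *
            (Real.log (rpost pX qs y x) - Real.log (r y x)) := by
    rw [lhs_eq, gf_eq, expand_F hα hpXpos hppos hqspos hrspos, ← Finset.sum_sub_distrib,
      ← Finset.sum_add_distrib]
    refine Finset.sum_congr rfl fun x _ => ?_
    rw [← Finset.sum_sub_distrib, ← Finset.sum_add_distrib]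
    refine Finset.sum_congr rfl fun y _ => ?_
    have hlq' : Real.log (q' x y) = Real.log (pYX x y) + (1 - 1/α) * Real.log (r y x)
        - Real.log (Wf α pYX r x) := by
      rw [hq']
      unfold nextq
      rw [Real.log_div (mul_pos (hppos x y) (Real.rpow_pos_of_pos (hrpos y x) _)).ne'
          (hWpos x).ne',
        Real.log_mul (hppos x y).ne' (Real.rpow_pos_of_pos (hrpos y x) _).ne',
        Real.log_rpow (hrpos y x)]
    rw [hlq']
    linear_combination (-(pX x * qs x y * Real.log (r y x))) * (hcβ hα)
  have idB : ∑ x, ∑ y, pX x * qs x y * (Real.log (rpost pX qs y x) - Real.log (r y x))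
      = ∑ x, pX x * klD (qs x) (qt x) - klD (smarg pX qs) (smarg pX qt) := by
    have key : ∀ x y, pX x * qs x y * (Real.log (rpost pX qs y x) - Real.log (r y x))
        = pX x * qs x y * (Real.log (qs x y) - Real.log (qt x y))
          - pX x * qs x y * (Real.log (smarg pX qs y) - Real.log (smarg pX qt y)) := by
      intro x y
      have h1 : Real.log (rpost pX qs y x)
          = Real.log (pX x) + Real.log (qs x y) - Real.log (smarg pX qs y) := by
        rw [rpost_eq, Real.log_div (mul_pos (hpXpos x) (hqspos x y)).ne' (hsspos y).ne',
          Real.log_mul (hpXpos x).ne' (hqspos x y).ne']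
      have h2 : Real.log (r y x)
          = Real.log (pX x) + Real.log (qt x y) - Real.log (smarg pX qt y) := by
        rw [hr, rpost_eq, Real.log_div (mul_pos (hpXpos x) (hqtpos x y)).ne' (hstpos y).ne',
          Real.log_mul (hpXpos x).ne' (hqtpos x y).ne']
      rw [h1, h2]; ring
    rw [Finset.sum_congr rfl fun x _ => Finset.sum_congr rfl fun y _ => key x y]
    rw [Finset.sum_congr rfl fun x (_ : x ∈ Finset.univ) => Finset.sum_sub_distrib _ _,
      Finset.sum_sub_distrib]
    congr 1
    · exact Finset.sum_congr rfl fun x _ => (klD_mul hqspos (fun y => hqtpos x y) x).symm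
    · rw [Finset.sum_comm]
      unfold klD
      refine Finset.sum_congr rfl fun y _ => ?_
      rw [Real.log_div (hsspos y).ne' (hstpos y).ne', ← Finset.sum_mul]
      rw [show (∑ x, pX x * qs x y) = smarg pX qs y from rfl]
  have hK : 0 ≤ ∑ x, pX x * klD (qs x) (qt x) :=
    Finset.sum_nonneg fun x _ => mul_nonneg (hpXpos x).le
      (klD_nonneg (hqs x) (fun y => hqspos x y) (hqt x) (fun y => hqtpos x y))
  have hS : 0 ≤ klD (smarg pX qs) (smarg pX qt) :=
    klD_nonneg (smarg_sum hpX hqs) hsspos (smarg_sum hpX hqt) hstpos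
  have hmul : 0 ≤ (α/(α-1) - 1) * ∑ x, pX x * klD (qs x) (qt x) :=
    mul_nonneg (sub_nonneg.2 (hc1 hα)) hK
  nlinarith [idA, idB, hS, hmul]

/-- one-sided first-order condition at a minimum on `[0,1]`. -/
lemma deriv_nonneg_of_min {φ : ℝ → ℝ} {d : ℝ} (h : HasDerivAt φ d 0)
    (hm : ∀ t ∈ Set.Ioo (0:ℝ) 1, φ 0 ≤ φ t) : 0 ≤ d := by
  rw [hasDerivAt_iff_tendsto_slope] at h
  have h2 : Filter.Tendsto (slope φ 0) (nhdsWithin 0 (Set.Ioi 0)) (nhds d) :=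
    h.mono_left (nhdsWithin_mono _ (fun t ht => ne_of_gt ht))
  refine ge_of_tendsto h2 ?_
  filter_upwards [Ioo_mem_nhdsGT_of_mem (Set.mem_Ico.2 ⟨le_refl (0:ℝ), zero_lt_one⟩)] with t ht
  have hmt := hm t ht
  rw [slope_def_field]
  have htpos : 0 < t - 0 := by simpa using ht.1
  exact div_nonneg (by linarith) htpos.le

/-- existence of a positive minimizer of `Φ` which is a fixed point of the Augustin
iteration. -/
lemma exists_min (hα : 1 < α) (hpX : ∑ x, pX x = 1) (hpXpos : ∀ x, 0 < pX x)
    (hppos : ∀ x y, 0 < pYX x y) :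
    ∃ qs : Y → ℝ, (∀ y, 0 < qs y) ∧ (∑ y, qs y = 1) ∧
      (∀ q : Y → ℝ, (∀ y, 0 < q y) → (∑ y, q y = 1) →
        Phi α pX pYX qs ≤ Phi α pX pYX q) ∧
      (∀ y, smarg pX (qgib α pYX qs) y = qs y) := by
  classical
  have hne2 := (hα1 hα).ne'
  have hipos : (0:ℝ) < (α-1)⁻¹ := inv_pos.2 (hα1 hα)
  -- the minimum of the channel entries
  obtain ⟨z0, -, hz0⟩ := Finset.exists_min_image Finset.univ
    (fun z : X × Y => pYX z.1 z.2) ⟨Classical.arbitrary (X × Y), Finset.mem_univ _⟩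
  set m := pYX z0.1 z0.2 with hm
  have hmpos : 0 < m := hppos z0.1 z0.2
  have hmle : ∀ x y, m ≤ pYX x y := fun x y => hz0 (x, y) (Finset.mem_univ _)
  set B : ℝ := (α-1)⁻¹ * (α * Real.log m) with hB
  -- a lower bound for `Φ` in terms of the smallest entry of `q`
  have lb : ∀ (q : Y → ℝ), (∀ y, 0 < q y) → ∀ y0 : Y,
      B - Real.log (q y0) ≤ Phi α pX pYX q := by
    intro q hqpos y0
    have hxterm : ∀ x : X, B - Real.log (q y0) ≤ (α-1)⁻¹ * Real.log (Zf α pYX q x) := by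
      intro x
      have h1 : m ^ α * q y0 ^ (1-α) ≤ Zf α pYX q x := by
        have h2 : m ^ α * q y0 ^ (1-α) ≤ pYX x y0 ^ α * q y0 ^ (1-α) :=
          mul_le_mul_of_nonneg_right
            (Real.rpow_le_rpow hmpos.le (hmle x y0) (hαpos hα).le)
            (Real.rpow_pos_of_pos (hqpos y0) _).le
        refine le_trans h2 ?_
        exact Finset.single_le_sum (f := fun y => pYX x y ^ α * q y ^ (1-α))
          (fun y _ => (mul_pos (Real.rpow_pos_of_pos (hppos x y) _)
            (Real.rpow_pos_of_pos (hqpos y) _)).le) (Finset.mem_univ y0)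
      have h3 : Real.log (m ^ α * q y0 ^ (1-α)) ≤ Real.log (Zf α pYX q x) :=
        Real.log_le_log (mul_pos (Real.rpow_pos_of_pos hmpos _)
          (Real.rpow_pos_of_pos (hqpos y0) _)) h1
      rw [Real.log_mul (Real.rpow_pos_of_pos hmpos _).ne'
          (Real.rpow_pos_of_pos (hqpos y0) _).ne',
        Real.log_rpow hmpos, Real.log_rpow (hqpos y0)] at h3
      have h4 := mul_le_mul_of_nonneg_left h3 hipos.le
      have h5 : (α-1)⁻¹ * (1-α) = -1 := by field_simp; ring
      have h6 : (α-1)⁻¹ * (α * Real.log m + (1-α) * Real.log (q y0))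
          = B - Real.log (q y0) := by
        rw [hB]
        linear_combination Real.log (q y0) * h5
      linarith [h4, h6]
    calc B - Real.log (q y0)
        = ∑ x, pX x * (B - Real.log (q y0)) := by rw [← Finset.sum_mul, hpX, one_mul]
      _ ≤ Phi α pX pYX q := Finset.sum_le_sum fun x _ =>
          mul_le_mul_of_nonneg_left (hxterm x) (hpXpos x).le
  -- the uniform distribution
  set u : Y → ℝ := fun _ => ((Fintype.card Y : ℝ))⁻¹ with hu
  have hcardpos : (0:ℝ) < (Fintype.card Y : ℝ) := by
    exact_mod_cast Fintype.card_pos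
  have hupos : ∀ y, 0 < u y := fun y => inv_pos.2 hcardpos
  have husum : ∑ y, u y = 1 := by
    rw [hu, Finset.sum_const, Finset.card_univ, nsmul_eq_mul, mul_inv_cancel₀ hcardpos.ne']
  set C0 : ℝ := Phi α pX pYX u with hC0
  set δ : ℝ := min ((Fintype.card Y : ℝ))⁻¹ (Real.exp (B - C0 - 1)) with hδ
  have hδpos : 0 < δ := lt_min (inv_pos.2 hcardpos) (Real.exp_pos _)
  have hδlog : Real.log δ ≤ B - C0 - 1 := by
    calc Real.log δ ≤ Real.log (Real.exp (B - C0 - 1)) :=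
          Real.log_le_log hδpos (min_le_right _ _)
      _ = B - C0 - 1 := Real.log_exp _
  -- small entries force a large `Φ`
  have hbig : ∀ (q : Y → ℝ), (∀ y, 0 < q y) → (∃ y1, q y1 ≤ δ) → C0 + 1 ≤ Phi α pX pYX q := by
    rintro q hqpos ⟨y1, hy1⟩
    have h1 := lb q hqpos y1
    have h2 : Real.log (q y1) ≤ Real.log δ := Real.log_le_log (hqpos y1) hy1
    linarith
  -- the compact set
  set K : Set (Y → ℝ) := (Set.univ.pi fun _ : Y => Set.Icc δ 1) ∩ {q | ∑ y, q y = 1}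
    with hK
  have hKmem : ∀ q : Y → ℝ, q ∈ K ↔ (∀ y, δ ≤ q y ∧ q y ≤ 1) ∧ ∑ y, q y = 1 := by
    intro q
    constructor
    · rintro ⟨h1, h2⟩
      exact ⟨fun y => h1 y (Set.mem_univ y), h2⟩
    · rintro ⟨h1, h2⟩
      exact ⟨fun y _ => h1 y, h2⟩
  have hKcomp : IsCompact K :=
    (isCompact_univ_pi fun _ => isCompact_Icc).inter_right
      (isClosed_eq (continuous_finset_sum _ fun y _ => continuous_apply y) continuous_const)
  have hδcard : δ ≤ ((Fintype.card Y : ℝ))⁻¹ := min_le_left _ _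
  have huK : u ∈ K := by
    rw [hKmem]
    refine ⟨fun y => ⟨hδcard, ?_⟩, husum⟩
    rw [hu]
    exact inv_le_one_of_one_le₀ (by exact_mod_cast Fintype.card_pos)
  have hcont : ContinuousOn (Phi α pX pYX) K := by
    refine continuousOn_of_forall_continuousAt fun q0 hq0 => ?_
    have hq0pos : ∀ y, 0 < q0 y := fun y =>
      lt_of_lt_of_le hδpos (((hKmem q0).1 hq0).1 y).1
    have hZc : ∀ x, ContinuousAt (fun q : Y → ℝ => Zf α pYX q x) q0 := by
      intro x
      unfold Zf
      exact tendsto_finset_sum _ fun y _ =>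
        (ContinuousAt.rpow_const
          ((continuous_apply y).continuousAt : ContinuousAt (fun q : Y → ℝ => q y) q0)
          (Or.inl (hq0pos y).ne')).const_mul _
    unfold Phi
    exact tendsto_finset_sum _ fun x _ =>
      ((ContinuousAt.log (hZc x) (Zf_pos (α := α) hppos hq0pos x).ne').const_mul
        _).const_mul _
  obtain ⟨qs, hqsK, hqsmin⟩ := hKcomp.exists_isMinOn ⟨u, huK⟩ hcont
  have hqsKm := (hKmem qs).1 hqsK
  have hqspos : ∀ y, 0 < qs y := fun y => lt_of_lt_of_le hδpos (hqsKm.1 y).1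
  have hqssum : ∑ y, qs y = 1 := hqsKm.2
  have hPhimin : Phi α pX pYX qs ≤ C0 := hqsmin huK
  -- global minimality over all positive pmfs
  have hglobal : ∀ q : Y → ℝ, (∀ y, 0 < q y) → (∑ y, q y = 1) →
      Phi α pX pYX qs ≤ Phi α pX pYX q := by
    intro q hqp hq1
    by_cases hqK : q ∈ K
    · exact hqsmin hqK
    · have hle1 : ∀ y, q y ≤ 1 := by
        intro y
        calc q y ≤ ∑ y', q y' := Finset.single_le_sum (fun y' _ => (hqp y').le)
              (Finset.mem_univ y)
          _ = 1 := hq1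
      have hex : ∃ y1, q y1 ≤ δ := by
        by_contra hcon
        push_neg at hcon
        exact hqK ((hKmem q).2 ⟨fun y => ⟨(hcon y).le, hle1 y⟩, hq1⟩)
      have := hbig q hqp hex
      linarith
  -- strict interiority
  have hint : ∀ y, δ < qs y := by
    intro y
    by_contra hcon
    push_neg at hcon
    have := hbig qs hqspos ⟨y, hcon⟩
    linarith
  refine ⟨qs, hqspos, hqssum, hglobal, ?_⟩
  -- the first-order condition gives the fixed-point property
  have hsle : ∀ y1, smarg pX (qgib α pYX qs) y1 ≤ qs y1 := by
    intro y1
    set e : Y → ℝ := fun y => if y = y1 then 1 else 0 with he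
    have hesum : ∑ y, e y = 1 := by
      rw [he]
      simp
    set φ : ℝ → ℝ := fun t =>
      ∑ x, pX x * ((α-1)⁻¹ *
        Real.log (∑ y, pYX x y ^ α * (qs y + t * (e y - qs y)) ^ (1-α))) with hφ
    -- derivative at 0
    have hD : HasDerivAt φ
        (∑ x, pX x * ((α-1)⁻¹ *
          ((∑ y, pYX x y ^ α * ((e y - qs y) * (1-α) * qs y ^ (1-α-1))) /
            (Zf α pYX qs x)))) 0 := by
      apply HasDerivAt.fun_sum
      intro x _
      have hZder : HasDerivAt
          (fun t => ∑ y, pYX x y ^ α * (qs y + t * (e y - qs y)) ^ (1-α))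
          (∑ y, pYX x y ^ α * ((e y - qs y) * (1-α) * qs y ^ (1-α-1))) 0 := by
        apply HasDerivAt.fun_sum
        intro y _
        have hb : HasDerivAt (fun t : ℝ => qs y + t * (e y - qs y)) (e y - qs y) 0 := by
          simpa using ((hasDerivAt_id (0:ℝ)).mul_const (e y - qs y)).const_add (qs y)
        have hb0 : (qs y + 0 * (e y - qs y)) ≠ 0 := by
          simpa using (hqspos y).ne'
        have := (hb.rpow_const (p := 1-α) (Or.inl hb0)).const_mul (pYX x y ^ α)
        simpa using this
      have hS0 : (∑ y, pYX x y ^ α * (qs y + (0:ℝ) * (e y - qs y)) ^ (1-α))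
          = Zf α pYX qs x := by
        unfold Zf
        refine Finset.sum_congr rfl fun y _ => ?_
        norm_num
      have hZ0 : (∑ y, pYX x y ^ α * (qs y + (0:ℝ) * (e y - qs y)) ^ (1-α)) ≠ 0 := by
        rw [hS0]
        exact (Zf_pos (α := α) hppos hqspos x).ne'
      have hlog := hZder.log hZ0
      have h6 := (hlog.const_mul ((α-1)⁻¹)).const_mul (pX x)
      rw [hS0] at h6
      exact h6
    -- minimality along the segment
    have hmin01 : ∀ t ∈ Set.Ioo (0:ℝ) 1, φ 0 ≤ φ t := by
      intro t ht
      have hqt_pos : ∀ y, 0 < qs y + t * (e y - qs y) := by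
        intro y
        have h1 : qs y + t * (e y - qs y) = (1 - t) * qs y + t * e y := by ring
        rw [h1]
        have h2 : 0 < (1 - t) * qs y :=
          mul_pos (by linarith [ht.2]) (hqspos y)
        have h3 : 0 ≤ t * e y := by
          refine mul_nonneg ht.1.le ?_
          rw [he]
          by_cases hy : y = y1 <;> simp [hy]
        linarith
      have hqt_sum : ∑ y, (qs y + t * (e y - qs y)) = 1 := by
        rw [Finset.sum_add_distrib, ← Finset.mul_sum, Finset.sum_sub_distrib,
          hqssum, hesum]
        ring
      have h7 := hglobal _ hqt_pos hqt_sum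
      have hφ0 : φ 0 = Phi α pX pYX qs := by
        rw [hφ]
        unfold Phi Zf
        simp
      have hφt : φ t = Phi α pX pYX (fun y => qs y + t * (e y - qs y)) := by
        rw [hφ]
        unfold Phi Zf
        rfl
      rw [hφ0, hφt]
      exact h7
    have hD0 := deriv_nonneg_of_min hD hmin01
    -- simplify the derivative
    have hsimp : ∀ x : X, (∑ y, pYX x y ^ α * ((e y - qs y) * (1-α) * qs y ^ (1-α-1)))
        = (1-α) * (pYX x y1 ^ α * qs y1 ^ (-α) - Zf α pYX qs x) := by
      intro x
      have hsplit : ∀ y, pYX x y ^ α * ((e y - qs y) * (1-α) * qs y ^ (1-α-1))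
          = (1-α) * ((if y = y1 then pYX x y ^ α * qs y ^ (1-α-1) else 0)
            - pYX x y ^ α * qs y ^ (1-α)) := by
        intro y
        have hq1a : qs y * qs y ^ (1-α-1) = qs y ^ (1-α) := by
          have h9 := Real.rpow_add (hqspos y) 1 (1-α-1)
          rw [Real.rpow_one] at h9
          rw [← h9]
          congr 1
          ring
        simp only [he]
        by_cases hy : y = y1
        · subst hy
          simp only [eq_self_iff_true, if_true]
          linear_combination (-((1-α) * pYX x y ^ α)) * hq1a
        · simp only [if_neg hy]
          linear_combination (-((1-α) * pYX x y ^ α)) * hq1a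
      rw [Finset.sum_congr rfl fun y _ => hsplit y, ← Finset.mul_sum,
        Finset.sum_sub_distrib, Finset.sum_ite_eq' Finset.univ y1
          (fun y => pYX x y ^ α * qs y ^ (1-α-1))]
      simp only [Finset.mem_univ, if_true]
      have : (1:ℝ)-α-1 = -α := by ring
      rw [this]
      rfl
    -- rewrite `D ≥ 0` into the desired inequality
    have hsm : smarg pX (qgib α pYX qs) y1
        = qs y1 * ∑ x, pX x * (pYX x y1 ^ α * qs y1 ^ (-α) / Zf α pYX qs x) := by
      unfold smarg qgib
      rw [Finset.mul_sum]
      refine Finset.sum_congr rfl fun x _ => ?_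
      have hq1a : qs y1 ^ (1-α) = qs y1 * qs y1 ^ (-α) := by
        have h9 := Real.rpow_add (hqspos y1) 1 (-α)
        rw [Real.rpow_one] at h9
        rw [← h9]
        congr 1
        try ring
      rw [hq1a]
      ring
    have hDval : (∑ x, pX x * ((α-1)⁻¹ *
          ((∑ y, pYX x y ^ α * ((e y - qs y) * (1-α) * qs y ^ (1-α-1))) /
            (Zf α pYX qs x))))
        = 1 - ∑ x, pX x * (pYX x y1 ^ α * qs y1 ^ (-α) / Zf α pYX qs x) := by
      rw [Finset.sum_congr rfl fun x _ => by rw [hsimp x]]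
      have hterm : ∀ x : X, pX x * ((α-1)⁻¹ *
          ((1-α) * (pYX x y1 ^ α * qs y1 ^ (-α) - Zf α pYX qs x) / (Zf α pYX qs x)))
          = pX x - pX x * (pYX x y1 ^ α * qs y1 ^ (-α) / Zf α pYX qs x) := by
        intro x
        have hZx := (Zf_pos (α := α) hppos hqspos x)
        have hZne := hZx.ne'
        field_simp
        ring
      rw [Finset.sum_congr rfl fun x _ => hterm x, Finset.sum_sub_distrib, hpX]
    rw [hDval] at hD0
    rw [hsm]
    nlinarith [hD0, hqspos y1]
  -- equal sums force equality
  have hsum2 : ∑ y, smarg pX (qgib α pYX qs) y = ∑ y, qs y := by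
    rw [smarg_sum hpX (qgib_sum hppos hqspos), hqssum]
  intro y
  by_contra hne
  have hlt : smarg pX (qgib α pYX qs) y < qs y := lt_of_le_of_ne (hsle y) hne
  have : ∑ y, smarg pX (qgib α pYX qs) y < ∑ y, qs y :=
    Finset.sum_lt_sum (fun y' _ => hsle y') ⟨y, Finset.mem_univ y, hlt⟩
  linarith [hsum2, this]

end AO

lemma ereal_coe_sum {ι : Type*} (s : Finset ι) (f : ι → ℝ) :
    ((∑ i ∈ s, f i : ℝ) : EReal) = ∑ i ∈ s, ((f i : ℝ) : EReal) := by
  induction s using Finset.cons_induction with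
  | empty => simp
  | cons a s ha ih => rw [Finset.sum_cons, Finset.sum_cons, EReal.coe_add, ih]

lemma ereal_sum_ne_bot {ι : Type*} (s : Finset ι) (f : ι → EReal)
    (hb : ∀ i ∈ s, f i ≠ ⊥) : ∑ i ∈ s, f i ≠ ⊥ := by
  induction s using Finset.cons_induction with
  | empty => simp
  | cons a s ha ih =>
      rw [Finset.sum_cons]
      rw [Ne, EReal.add_eq_bot_iff]
      push_neg
      exact ⟨hb a (Finset.mem_cons_self a s), ih fun i hi => hb i (Finset.mem_cons_of_mem hi)⟩

lemma ereal_sum_eq_top {ι : Type*} (s : Finset ι) (f : ι → EReal)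
    (hb : ∀ i ∈ s, f i ≠ ⊥) {i0 : ι} (h0 : i0 ∈ s) (ht : f i0 = ⊤) :
    ∑ i ∈ s, f i = ⊤ := by
  induction s using Finset.cons_induction with
  | empty => exact absurd h0 (Finset.notMem_empty _)
  | cons a s ha ih =>
      rw [Finset.sum_cons]
      rcases Finset.mem_cons.1 h0 with h | h
      · rw [← h, ht]
        exact EReal.top_add_of_ne_bot
          (ereal_sum_ne_bot s f fun i hi => hb i (Finset.mem_cons_of_mem hi))
      · rw [ih (fun i hi => hb i (Finset.mem_cons_of_mem hi)) h]
        exact EReal.add_top_of_ne_bot (hb a (Finset.mem_cons_self a s))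

section AO2
variable {X Y : Type*} [Fintype X] [Fintype Y] [Nonempty X] [Nonempty Y]
variable {α : ℝ} {pX : X → ℝ} {pYX : X → Y → ℝ}

/-- value of the `acMI` sum at a positive pmf. -/
lemma acMI_term_eq (hα : 1 < α) (hppos : ∀ x y, 0 < pYX x y)
    {q : Y → ℝ} (hqpos : ∀ y, 0 < q y) :
    (∑ x, ((pX x : ℝ) : EReal) * renyiDE α (fun y => pYX x y) q)
      = ((Phi α pX pYX q : ℝ) : EReal) := by
  have hterm : ∀ x : X, renyiDE α (fun y => pYX x y) q
      = (((α-1)⁻¹ * Real.log (Zf α pYX q x) : ℝ) : EReal) := by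
    intro x
    unfold renyiDE
    rw [if_neg]
    · norm_num [Zf, one_div]
    · rintro ⟨-, z, -, hz0⟩
      exact (hqpos z).ne' hz0
  rw [Finset.sum_congr rfl fun x _ => by rw [hterm x]]
  unfold Phi
  rw [ereal_coe_sum]
  exact Finset.sum_congr rfl fun x _ => by rw [← EReal.coe_mul]

/-- `acMI` equals the minimum of `Φ`. -/
lemma acMI_eq (hα : 1 < α) (hpX : ∑ x, pX x = 1) (hpXpos : ∀ x, 0 < pX x)
    (hppos : ∀ x y, 0 < pYX x y) {qs : Y → ℝ} (hqspos : ∀ y, 0 < qs y)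
    (hqssum : ∑ y, qs y = 1)
    (hqsmin : ∀ q : Y → ℝ, (∀ y, 0 < q y) → (∑ y, q y = 1) →
      Phi α pX pYX qs ≤ Phi α pX pYX q) :
    acMI α pX pYX = ((Phi α pX pYX qs : ℝ) : EReal) := by
  unfold acMI
  apply le_antisymm
  · apply sInf_le
    exact ⟨qs, ⟨fun y => (hqspos y).le, hqssum⟩, (acMI_term_eq hα hppos hqspos).symm⟩
  · apply le_sInf
    rintro v ⟨qY, ⟨hqY0, hqY1⟩, rfl⟩
    by_cases hz : ∀ y, qY y ≠ 0
    · have hqYpos : ∀ y, 0 < qY y := fun y => lt_of_le_of_ne (hqY0 y) (Ne.symm (hz y))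
      rw [acMI_term_eq hα hppos hqYpos, EReal.coe_le_coe_iff]
      exact hqsmin qY hqYpos hqY1
    · push_neg at hz
      obtain ⟨y0, hy0⟩ := hz
      have htop : ∑ x, ((pX x : ℝ) : EReal) * renyiDE α (fun y => pYX x y) qY = ⊤ := by
        have hterm : ∀ x : X, ((pX x : ℝ) : EReal) * renyiDE α (fun y => pYX x y) qY
            = ⊤ := by
          intro x
          have : renyiDE α (fun y => pYX x y) qY = ⊤ := by
            unfold renyiDE
            rw [if_pos ⟨hα, y0, (hppos x y0).ne', hy0⟩]
          rw [this]
          exact EReal.coe_mul_top_of_pos (hpXpos x)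
        exact ereal_sum_eq_top _ _ (fun x _ => by rw [hterm x]; exact top_ne_bot)
          (Finset.mem_univ (Classical.arbitrary X)) (hterm _)
      rw [htop]
      exact le_top

/-- the channels of the AO recursion are positive pmfs. -/
lemma qtseq_props (hα : 1 < α) (hpXpos : ∀ x, 0 < pX x) (hppos : ∀ x y, 0 < pYX x y)
    {q0 : X → Y → ℝ} (hq0sum : ∀ x, ∑ y, q0 x y = 1) (hq0pos : ∀ x y, 0 < q0 x y) :
    ∀ k, (∀ x y, 0 < qtseq α pX pYX q0 k x y) ∧
      (∀ x, ∑ y, qtseq α pX pYX q0 k x y = 1) := by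
  intro k
  induction k with
  | zero => exact ⟨hq0pos, hq0sum⟩
  | succ k ih =>
      have hrpos := rpost_pos hpXpos ih.1
      rw [qtseq_succ]
      exact ⟨nextq_pos (hβpos hα) hppos hrpos, nextq_sum (hβpos hα) hppos hrpos⟩

lemma klD_self {q : Y → ℝ} (hqpos : ∀ y, 0 < q y) : klD q q = 0 := by
  unfold klD
  rw [Finset.sum_eq_zero]
  intro y _
  rw [div_self (hqpos y).ne', Real.log_one, mul_zero]

end AO2
end AOaux


/-- Global convergence of the AO algorithm for the Augustin--Csiszár mutual information
(`α > 1`): (a) the objective values are nondecreasing and bounded by `I_α^C`, and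
(b) `F̃_α^C(q̃^{(k+1)}, r^{(k)}) → I_α^C` as `k → ∞`. -/
theorem FtildeC_AO_monotone_and_tendsto_acMI {X Y : Type*} [Fintype X] [Fintype Y]
    [Nonempty X] [Nonempty Y]
    (α : ℝ) (hα : 1 < α)
    (pX : X → ℝ) (hpX : IsPMF pX) (hpXpos : ∀ x, 0 < pX x)
    (pYX : X → Y → ℝ) (hpYX : ∀ x, IsPMF (pYX x)) (hpYXpos : ∀ x y, 0 < pYX x y)
    (q0 : X → Y → ℝ) (hq0 : ∀ x, IsPMF (q0 x)) (hq0pos : ∀ x y, 0 < q0 x y) :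
    (∀ k : ℕ,
      FtildeC α pX pYX (qtseq α pX pYX q0 k) (rpost pX (qtseq α pX pYX q0 k))
        ≤ FtildeC α pX pYX (qtseq α pX pYX q0 (k + 1)) (rpost pX (qtseq α pX pYX q0 k)) ∧
      FtildeC α pX pYX (qtseq α pX pYX q0 (k + 1)) (rpost pX (qtseq α pX pYX q0 k))
        ≤ FtildeC α pX pYX (qtseq α pX pYX q0 (k + 1))
            (rpost pX (qtseq α pX pYX q0 (k + 1))) ∧
      ((FtildeC α pX pYX (qtseq α pX pYX q0 (k + 1))
          (rpost pX (qtseq α pX pYX q0 (k + 1))) : ℝ) : EReal)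
        ≤ acMI α pX pYX) ∧
    Filter.Tendsto
      (fun k : ℕ =>
        ((FtildeC α pX pYX (qtseq α pX pYX q0 (k + 1))
            (rpost pX (qtseq α pX pYX q0 k)) : ℝ) : EReal))
      Filter.atTop (nhds (acMI α pX pYX)) := by
  classical
  obtain ⟨qs, hqspos, hqssum, hqsmin, hqsfix⟩ :=
    AOaux.exists_min (pX := pX) (pYX := pYX) hα hpX.2 hpXpos hpYXpos
  set L := AOaux.Phi α pX pYX qs with hL
  have hacMI : acMI α pX pYX = ((L : ℝ) : EReal) :=
    AOaux.acMI_eq hα hpX.2 hpXpos hpYXpos hqspos hqssum hqsmin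
  set Q : ℕ → X → Y → ℝ := qtseq α pX pYX q0 with hQ
  have hq0sum : ∀ x, ∑ y, q0 x y = 1 := fun x => (hq0 x).2
  have hprops := AOaux.qtseq_props hα hpXpos hpYXpos hq0sum hq0pos
  have hQpos : ∀ k x y, 0 < Q k x y := fun k => (hprops k).1
  have hQsum : ∀ k x, ∑ y, Q k x y = 1 := fun k => (hprops k).2
  have hrpos : ∀ k, ∀ y x, 0 < rpost pX (Q k) y x := fun k =>
    AOaux.rpost_pos hpXpos (hQpos k)
  have hrsum : ∀ k, ∀ y, ∑ x, rpost pX (Q k) y x = 1 := fun k =>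
    AOaux.rpost_sum hpXpos (hQpos k)
  have hQsucc : ∀ k, Q (k+1) = AOaux.nextq α pYX (rpost pX (Q k)) := fun k => rfl
  set g : ℕ → ℝ := fun k => AOaux.Gf α pX pYX (rpost pX (Q k)) with hg
  have hFg : ∀ k, FtildeC α pX pYX (Q (k+1)) (rpost pX (Q k)) = g k := by
    intro k
    rw [hQsucc k]
    exact AOaux.F_nextq_eq_G hα hpXpos hpYXpos (hrpos k)
  have hgle : ∀ k, g k ≤ L := fun k =>
    AOaux.G_le_Phi hα hpX.2 hpXpos hpYXpos hqssum hqspos (hrpos k) (hrsum k)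
  have ha1 : ∀ k, FtildeC α pX pYX (Q k) (rpost pX (Q k))
      ≤ FtildeC α pX pYX (Q (k+1)) (rpost pX (Q k)) := by
    intro k
    rw [hFg k]
    exact AOaux.F_le_G hα hpXpos hpYXpos (hQsum k) (hQpos k) (hrpos k)
  have ha2 : ∀ k, FtildeC α pX pYX (Q (k+1)) (rpost pX (Q k))
      ≤ FtildeC α pX pYX (Q (k+1)) (rpost pX (Q (k+1))) := fun k =>
    AOaux.F_le_F_rpost hα hpXpos hpYXpos (hQpos (k+1)) (hrpos k) (hrsum k)
  have ha3r : ∀ k, FtildeC α pX pYX (Q (k+1)) (rpost pX (Q (k+1))) ≤ L := fun k =>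
    le_trans (AOaux.F_le_G hα hpXpos hpYXpos (hQsum (k+1)) (hQpos (k+1))
      (hrpos (k+1))) (hgle (k+1))
  have hmono : Monotone g := monotone_nat_of_le_succ fun k => by
    calc g k = FtildeC α pX pYX (Q (k+1)) (rpost pX (Q k)) := (hFg k).symm
      _ ≤ FtildeC α pX pYX (Q (k+1)) (rpost pX (Q (k+1))) := ha2 k
      _ ≤ g (k+1) := AOaux.F_le_G hα hpXpos hpYXpos (hQsum (k+1)) (hQpos (k+1))
          (hrpos (k+1))
  set qg := AOaux.qgib α pYX qs with hqg
  have hqgpos : ∀ x y, 0 < qg x y := AOaux.qgib_pos hpYXpos hqspos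
  have hqgsum : ∀ x, ∑ y, qg x y = 1 := AOaux.qgib_sum hpYXpos hqspos
  have hJ : FtildeC α pX pYX qg (rpost pX qg) = L := by
    rw [hqg, AOaux.J_qgib hα hpX.2 hpXpos hpYXpos hqssum hqspos]
    have heq : AOaux.smarg pX (AOaux.qgib α pYX qs) = qs := funext hqsfix
    rw [heq, AOaux.klD_self hqspos, sub_zero]
  set c := α/(α-1) with hc
  set K : ℕ → ℝ := fun k => ∑ x, pX x * klD (qg x) (Q k x) with hK
  have hKnn : ∀ k, 0 ≤ K k := fun k => Finset.sum_nonneg fun x _ =>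
    mul_nonneg (hpXpos x).le (AOaux.klD_nonneg (hqgsum x) (fun y => hqgpos x y)
      (hQsum k x) (fun y => hQpos k x y))
  have htel : ∀ k, L - g k ≤ c * K k - c * K (k+1) := by
    intro k
    have h0 := AOaux.telescope hα hpX.2 hpXpos hpYXpos (hQsum k) (hQpos k)
      hqgsum hqgpos
    rw [hJ] at h0
    exact h0
  have hbdd : BddAbove (Set.range g) := ⟨L, by rintro _ ⟨k, rfl⟩; exact hgle k⟩
  set S := iSup g with hS
  have hSleL : S ≤ L := ciSup_le hgle
  have hgleS : ∀ k, g k ≤ S := fun k => le_ciSup hbdd k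
  have htelsum : ∀ n : ℕ, (n : ℝ) * (L - S) ≤ c * K 0 := by
    intro n
    have hsum : ∑ k ∈ Finset.range n, (L - g k) ≤ c * K 0 - c * K n := by
      induction n with
      | zero => simp
      | succ n ihn =>
          rw [Finset.sum_range_succ]
          have := htel n
          linarith
    have h1 : (n:ℝ) * (L - S) = ∑ k ∈ Finset.range n, (L - S) := by
      rw [Finset.sum_const, Finset.card_range, nsmul_eq_mul]
    have h2 : ∑ k ∈ Finset.range n, (L - S) ≤ ∑ k ∈ Finset.range n, (L - g k) :=
      Finset.sum_le_sum fun k _ => by linarith [hgleS k]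
    have h3 : 0 ≤ c * K n := mul_nonneg (AOaux.hcpos hα).le (hKnn n)
    linarith
  have hLleS : L ≤ S := by
    by_contra hcon
    push_neg at hcon
    obtain ⟨n, hn⟩ := exists_nat_gt ((c * K 0) / (L - S))
    have h5 : c * K 0 < n * (L - S) := (div_lt_iff₀ (by linarith)).1 hn
    linarith [htelsum n]
  have hSL : S = L := le_antisymm hSleL hLleS
  have hgtend : Filter.Tendsto g Filter.atTop (nhds L) := by
    rw [← hSL]
    exact tendsto_atTop_ciSup hmono hbdd
  constructor
  · intro k
    refine ⟨ha1 k, ha2 k, ?_⟩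
    rw [hacMI, EReal.coe_le_coe_iff]
    exact ha3r k
  · rw [hacMI]
    rw [show (fun k : ℕ => ((FtildeC α pX pYX (Q (k+1)) (rpost pX (Q k)) : ℝ) : EReal))
        = fun k => ((g k : ℝ) : EReal) from funext fun k => by rw [hFg k]]
    exact EReal.tendsto_coe.2 hgtend
end
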